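/- arXiv:1310.4987 — 5 statements merged into one kernel-verified Lean document; each statement's English description precedes it below -/
import Mathlib

section
/- Let K be a commutative ring, A a K-algebra, B a K-subalgebra such that B ⊗_K A ⊕ * ≅ A^n as B-A-bimodules, and let R = A^B be the centralizer of B in A. If B is finitely generated projective as a K-module, then A is an H-separable extension of R. -/
/-!  A noncommutative relative tensor product `L ⊗_C R` for a ring `C` mapping
into rings `L` (acting on the right through `f`) and `R` (acting on the left
through `g`), together with the outer left `L`-action `lact`, the outer right
`R`-action `ract`, a lifting principle for balanced biadditive maps, and the
multiplication map. -/

open scoped TensorProduct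

noncomputable section
namespace NCT

variable {C L R : Type*} [Ring C] [Ring L] [Ring R]

/-- The submodule of relations `(l * f c) ⊗ r - l ⊗ (g c * r)`. -/
def rel (f : C →+* L) (g : C →+* R) : Submodule ℤ (L ⊗[ℤ] R) :=
  Submodule.span ℤ
    {x | ∃ (l : L) (c : C) (r : R), x = (l * f c) ⊗ₜ[ℤ] r - l ⊗ₜ[ℤ] (g c * r)}

/-- The relative tensor product `L ⊗_C R`. -/
def Tens (f : C →+* L) (g : C →+* R) : Type _ := (L ⊗[ℤ] R) ⧸ rel f g

instance (f : C →+* L) (g : C →+* R) : AddCommGroup (Tens f g) :=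
  inferInstanceAs (AddCommGroup ((L ⊗[ℤ] R) ⧸ rel f g))

variable (f : C →+* L) (g : C →+* R)

/-- The canonical image of `l ⊗ r` in `L ⊗_C R`. -/
def tmul (l : L) (r : R) : Tens f g := Submodule.Quotient.mk (l ⊗ₜ[ℤ] r)

lemma tmul_rel (l : L) (c : C) (r : R) :
    tmul f g (l * f c) r = tmul f g l (g c * r) := by
  refine (Submodule.Quotient.eq _).2 ?_
  exact Submodule.subset_span ⟨l, c, r, rfl⟩

lemma tmul_add_left (l l' : L) (r : R) :
    tmul f g (l + l') r = tmul f g l r + tmul f g l' r := by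
  show Submodule.Quotient.mk _ = _
  rw [TensorProduct.add_tmul, Submodule.Quotient.mk_add]; rfl

lemma tmul_add_right (l : L) (r r' : R) :
    tmul f g l (r + r') = tmul f g l r + tmul f g l r' := by
  show Submodule.Quotient.mk _ = _
  rw [TensorProduct.tmul_add, Submodule.Quotient.mk_add]; rfl

/-- Package a biadditive map as a bundled `AddMonoidHom`-valued hom. -/
def mkBilin {M N P : Type*} [AddCommGroup M] [AddCommGroup N] [AddCommGroup P]
    (φ : M → N → P)
    (h1 : ∀ m m' n, φ (m + m') n = φ m n + φ m' n)
    (h2 : ∀ m n n', φ m (n + n') = φ m n + φ m n') : M →+ N →+ P :=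
  AddMonoidHom.mk' (fun m => AddMonoidHom.mk' (φ m) (h2 m))
    (fun m m' => by ext n; exact h1 m m' n)

@[simp] lemma mkBilin_apply {M N P : Type*} [AddCommGroup M] [AddCommGroup N] [AddCommGroup P]
    (φ : M → N → P) (h1 h2) (m : M) (n : N) : mkBilin φ h1 h2 m n = φ m n := rfl

/-- Lift a balanced biadditive map to the relative tensor product. -/
def lift {P : Type*} [AddCommGroup P] (φ : L →+ R →+ P)
    (hbal : ∀ l c r, φ (l * f c) r = φ l (g c * r)) : Tens f g →+ P :=
  (Submodule.liftQ (rel f g)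
    (TensorProduct.liftAddHom φ (by
      intro n l r
      simp only [AddMonoidHom.map_zsmul, AddMonoidHom.smul_apply]) ).toIntLinearMap
    (by
      rw [rel, Submodule.span_le]
      rintro x ⟨l, c, r, rfl⟩
      simp only [SetLike.mem_coe, LinearMap.mem_ker, AddMonoidHom.coe_toIntLinearMap,
        map_sub, TensorProduct.liftAddHom_tmul]
      rw [hbal, sub_self])).toAddMonoidHom

@[simp] lemma lift_tmul {P : Type*} [AddCommGroup P] (φ : L →+ R →+ P)
    (hbal : ∀ l c r, φ (l * f c) r = φ l (g c * r)) (l : L) (r : R) :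
    lift f g φ hbal (tmul f g l r) = φ l r := rfl

/-- The outer left action of `L` on `L ⊗_C R`. -/
def lact (l : L) : Tens f g →+ Tens f g :=
  lift f g (mkBilin (fun l' r => tmul f g (l * l') r)
      (fun a b r => by rw [mul_add, tmul_add_left])
      (fun a r s => by rw [tmul_add_right]))
    (fun l' c r => by simp only [mkBilin_apply]; rw [← mul_assoc, tmul_rel])

@[simp] lemma lact_tmul (l l' : L) (r : R) :
    lact f g l (tmul f g l' r) = tmul f g (l * l') r := rfl

/-- The outer right action of `R` on `L ⊗_C R`. -/
def ract (r : R) : Tens f g →+ Tens f g :=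
  lift f g (mkBilin (fun l' r' => tmul f g l' (r' * r))
      (fun a b r' => by rw [tmul_add_left])
      (fun a r' s => by rw [add_mul, tmul_add_right]))
    (fun l' c r' => by simp only [mkBilin_apply]; rw [tmul_rel, mul_assoc])

@[simp] lemma ract_tmul (r r' : R) (l : L) :
    ract f g r (tmul f g l r') = tmul f g l (r' * r) := rfl

/-- The map induced on relative tensor products by a ring map on the left factor. -/
def mapLeft {L' : Type*} [Ring L'] (h : L →+* L') :
    Tens f g →+ Tens (h.comp f) g :=
  lift f g (mkBilin (fun l r => tmul (h.comp f) g (h l) r)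
      (fun a b r => by rw [map_add, tmul_add_left])
      (fun a r s => by rw [tmul_add_right]))
    (fun l c r => by
      simp only [mkBilin_apply, map_mul]
      exact tmul_rel (h.comp f) g (h l) c r)

@[simp] lemma mapLeft_tmul {L' : Type*} [Ring L'] (h : L →+* L') (l : L) (r : R) :
    mapLeft f g h (tmul f g l r) = tmul (h.comp f) g (h l) r := rfl

/-- The multiplication map `L ⊗_C R → R`, `l ⊗ r ↦ jl l * r`, for a ring map
`jl : L → R` compatible with the two maps from `C`. -/
def mulMap (jl : L →+* R) (hcomp : ∀ c, jl (f c) = g c) : Tens f g →+ R :=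
  lift f g (mkBilin (fun l r => jl l * r)
      (fun a b r => by rw [map_add, add_mul])
      (fun a r s => by rw [mul_add]))
    (fun l c r => by simp only [mkBilin_apply]; rw [map_mul, hcomp, mul_assoc])

@[simp] lemma mulMap_tmul (jl : L →+* R) (hcomp : ∀ c, jl (f c) = g c) (l : L) (r : R) :
    mulMap f g jl hcomp (tmul f g l r) = jl l * r := rfl

/-- Induction principle: every element of `L ⊗_C R` is built from `tmul`s. -/
lemma tens_induction {p : Tens f g → Prop} (zero : p 0)
    (tm : ∀ l r, p (tmul f g l r)) (add : ∀ x y, p x → p y → p (x + y)) :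
    ∀ x, p x := by
  intro x
  obtain ⟨y, rfl⟩ := Submodule.Quotient.mk_surjective _ x
  induction y using TensorProduct.induction_on with
  | zero => exact zero
  | tmul l r => exact tm l r
  | add a b ha hb =>
      rw [Submodule.Quotient.mk_add]
      exact add _ _ ha hb

end NCT
end

noncomputable section AuxSugano
open NCT

variable {K A : Type*} [CommRing K] [Ring A] [Algebra K A] {B : Subalgebra K A}

/-- Lift of `b ⊗ a ↦ φ b * a` for a `K`-semilinear `φ`. -/
def Phi (φ : ↥B → A) (h1 : ∀ x y : ↥B, φ (x + y) = φ x + φ y)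
    (h2 : ∀ (k : K) (b : ↥B), φ (algebraMap K ↥B k * b) = algebraMap K A k * φ b) :
    Tens (algebraMap K ↥B) (algebraMap K A) →+ A :=
  lift _ _ (mkBilin (fun b a => φ b * a)
      (fun x y a => by rw [h1, add_mul])
      (fun x a a' => by rw [mul_add]))
    (fun b k a => by
      simp only [mkBilin_apply]
      rw [← Algebra.commutes k b, h2, Algebra.commutes k (φ b), mul_assoc])

@[simp] lemma Phi_tmul (φ : ↥B → A) (h1 h2) (b : ↥B) (a : A) :
    Phi φ h1 h2 (tmul _ _ b a) = φ b * a := rfl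

lemma Phi_ract (φ : ↥B → A) {h1 h2} (c : A)
    (x : Tens (algebraMap K ↥B) (algebraMap K A)) :
    Phi φ h1 h2 (ract _ _ c x) = Phi φ h1 h2 x * c := by
  induction x using tens_induction with
  | zero => rw [map_zero, map_zero, zero_mul]
  | tm l r => rw [ract_tmul, Phi_tmul, Phi_tmul, mul_assoc]
  | add x y hx hy => rw [map_add, map_add, map_add, hx, hy, add_mul]

lemma Phi_congr {φ φ' : ↥B → A} (h : ∀ b, φ b = φ' b) {h1 h2 h1' h2'}
    (x : Tens (algebraMap K ↥B) (algebraMap K A)) :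
    Phi φ h1 h2 x = Phi φ' h1' h2' x := by
  induction x using tens_induction with
  | zero => rw [map_zero, map_zero]
  | tm l r => rw [Phi_tmul, Phi_tmul, h]
  | add x y hx hy => rw [map_add, map_add, hx, hy]

/-- The middle multiplication `b ⊗ c ↦ b ⊗ (a * c)`. -/
def mid (a : A) : Tens (algebraMap K ↥B) (algebraMap K A) →+
    Tens (algebraMap K ↥B) (algebraMap K A) :=
  lift _ _ (mkBilin (fun b c => tmul _ _ b (a * c))
      (fun x y c => by rw [tmul_add_left])
      (fun x c c' => by rw [mul_add, tmul_add_right]))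
    (fun b k c => by
      simp only [mkBilin_apply]
      rw [tmul_rel, ← mul_assoc, Algebra.commutes k a, mul_assoc])

@[simp] lemma mid_tmul (a : A) (b : ↥B) (c : A) :
    mid a (tmul _ _ b c) = tmul _ _ b (a * c) := rfl

lemma mid_lact (a : A) (b : ↥B) (x : Tens (algebraMap K ↥B) (algebraMap K A)) :
    mid a (lact _ _ b x) = lact _ _ b (mid a x) := by
  induction x using tens_induction with
  | zero => simp only [map_zero]
  | tm l r => rw [lact_tmul, mid_tmul, mid_tmul, lact_tmul]
  | add x y hx hy => simp only [map_add, hx, hy]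

lemma mid_ract (a : A) (c : A) (x : Tens (algebraMap K ↥B) (algebraMap K A)) :
    mid a (ract _ _ c x) = ract _ _ c (mid a x) := by
  induction x using tens_induction with
  | zero => simp only [map_zero]
  | tm l r => rw [ract_tmul, mid_tmul, mid_tmul, ract_tmul, mul_assoc]
  | add x y hx hy => simp only [map_add, hx, hy]

lemma Phi_mid {φ φ' : ↥B → A} (a : A) (h : ∀ b, φ' b = φ b * a) {h1' h2' h1 h2}
    (x : Tens (algebraMap K ↥B) (algebraMap K A)) :
    Phi φ' h1' h2' x = Phi φ h1 h2 (mid a x) := by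
  induction x using tens_induction with
  | zero => simp only [map_zero]
  | tm l r => rw [Phi_tmul, mid_tmul, Phi_tmul, h, mul_assoc]
  | add x y hx hy => simp only [map_add, hx, hy]

/-- `tmul` in the left slot as an additive hom. -/
def tmulLeft {C L R : Type*} [Ring C] [Ring L] [Ring R] (f : C →+* L) (g : C →+* R)
    (r : R) : L →+ Tens f g :=
  AddMonoidHom.mk' (fun l => tmul f g l r) (fun a b => tmul_add_left f g a b r)

@[simp] lemma tmulLeft_apply {C L R : Type*} [Ring C] [Ring L] [Ring R] (f : C →+* L)
    (g : C →+* R) (r : R) (l : L) : tmulLeft f g r l = tmul f g l r := rfl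

/-- `tmul` in the right slot as an additive hom. -/
def tmulRight {C L R : Type*} [Ring C] [Ring L] [Ring R] (f : C →+* L) (g : C →+* R)
    (l : L) : R →+ Tens f g :=
  AddMonoidHom.mk' (fun r => tmul f g l r) (fun a b => tmul_add_right f g l a b)

@[simp] lemma tmulRight_apply {C L R : Type*} [Ring C] [Ring L] [Ring R] (f : C →+* L)
    (g : C →+* R) (l : L) (r : R) : tmulRight f g l r = tmul f g l r := rfl

/-- The multiplication-type map `b ⊗ a ↦ ↑b * a`. -/
def muB (B : Subalgebra K A) : Tens (algebraMap K ↥B) (algebraMap K A) →+ A :=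
  Phi (fun b => (b : A)) (fun x y => by push_cast; rfl)
    (fun k b => by
      rw [Subalgebra.coe_mul, Subalgebra.coe_algebraMap])

lemma muB_lact (b : ↥B) (x : Tens (algebraMap K ↥B) (algebraMap K A)) :
    muB B (lact _ _ b x) = (b : A) * muB B x := by
  induction x using tens_induction with
  | zero => rw [map_zero, map_zero, mul_zero]
  | tm l r =>
      rw [lact_tmul]
      show ((b * l : ↥B) : A) * r = (b : A) * (((l : ↥B) : A) * r)
      push_cast; rw [mul_assoc]
  | add x y hx hy => rw [map_add, map_add, map_add, hx, hy, mul_add]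

/-- The K-semilinear map `b ↦ ∑ t, σv b t • v t` lifted to the tensor product. -/
def PhiV {s : ℕ} (σv : ↥B →ₗ[K] (Fin s → K)) (v : Fin s → A) :
    Tens (algebraMap K ↥B) (algebraMap K A) →+ A :=
  Phi (fun b => ∑ t, σv b t • v t)
    (fun x y => by simp [map_add, add_smul, Finset.sum_add_distrib])
    (fun k b => by
      have hb : algebraMap K ↥B k * b = k • b := (Algebra.smul_def k b).symm
      rw [hb, map_smul, ← Algebra.smul_def, Finset.smul_sum]
      exact Finset.sum_congr rfl fun t _ => by
        rw [Pi.smul_apply, smul_eq_mul, mul_smul])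

lemma PhiV_add {s : ℕ} (σv : ↥B →ₗ[K] (Fin s → K)) (v w : Fin s → A)
    (x : Tens (algebraMap K ↥B) (algebraMap K A)) :
    PhiV σv (v + w) x = PhiV σv v x + PhiV σv w x := by
  induction x using tens_induction with
  | zero => rw [map_zero, map_zero, map_zero, add_zero]
  | tm l r =>
      show (∑ t, σv l t • (v + w) t) * r
          = (∑ t, σv l t • v t) * r + (∑ t, σv l t • w t) * r
      rw [← add_mul, ← Finset.sum_add_distrib]
      congr 1
      exact Finset.sum_congr rfl fun t _ => by rw [Pi.add_apply, smul_add]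
  | add x y hx hy => rw [map_add, map_add, map_add, hx, hy, add_add_add_comm]

lemma PhiV_smul_left {s : ℕ} (σv : ↥B →ₗ[K] (Fin s → K)) (a : A) (v : Fin s → A)
    (x : Tens (algebraMap K ↥B) (algebraMap K A)) :
    PhiV σv (fun t => a * v t) x = a * PhiV σv v x := by
  induction x using tens_induction with
  | zero => rw [map_zero, map_zero, mul_zero]
  | tm l r =>
      show (∑ t, σv l t • (a * v t)) * r = a * ((∑ t, σv l t • v t) * r)
      rw [← mul_assoc, Finset.mul_sum]
      congr 1
      exact Finset.sum_congr rfl fun t _ => (mul_smul_comm _ _ _).symm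
  | add x y hx hy => rw [map_add, map_add, hx, hy, mul_add]

lemma PhiV_mul_right {s : ℕ} (σv : ↥B →ₗ[K] (Fin s → K)) (a : A) (v : Fin s → A)
    (x : Tens (algebraMap K ↥B) (algebraMap K A)) :
    PhiV σv (fun t => v t * a) x = PhiV σv v (mid a x) :=
  Phi_mid a (fun b => by
    rw [Finset.sum_mul]
    exact Finset.sum_congr rfl fun t _ => (smul_mul_assoc _ _ _).symm) x

lemma PhiV_ract {s : ℕ} (σv : ↥B →ₗ[K] (Fin s → K)) (v : Fin s → A) (c : A)
    (x : Tens (algebraMap K ↥B) (algebraMap K A)) :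
    PhiV σv v (ract _ _ c x) = PhiV σv v x * c := Phi_ract _ c x

lemma muB_ract (c : A) (x : Tens (algebraMap K ↥B) (algebraMap K A)) :
    muB B (ract _ _ c x) = muB B x * c := Phi_ract _ c x

lemma PhiV_eq_muB {s : ℕ} (σv : ↥B →ₗ[K] (Fin s → K)) (v : Fin s → A)
    (h : ∀ b : ↥B, ∑ t, σv b t • v t = (b : A))
    (x : Tens (algebraMap K ↥B) (algebraMap K A)) :
    PhiV σv v x = muB B x := Phi_congr h x

/-- The map `A ⊗_R A → A^s`, `a ⊗ a' ↦ (a * bt t * a')_t`. -/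
def Imap {s : ℕ} (bt : Fin s → ↥B) :
    Tens (Subring.centralizer (B : Set A)).subtype (Subring.centralizer (B : Set A)).subtype →+
      (Fin s → A) :=
  lift _ _ (mkBilin (fun a a' => fun t => a * (bt t : A) * a')
      (fun x y a' => by
        funext t
        show (x + y) * (bt t : A) * a' = x * (bt t : A) * a' + y * (bt t : A) * a'
        rw [add_mul, add_mul])
      (fun x a' a'' => by
        funext t
        show x * (bt t : A) * (a' + a'') = x * (bt t : A) * a' + x * (bt t : A) * a''
        rw [mul_add]))
    (fun l c r => by
      funext t
      show (l * (c : A)) * (bt t : A) * r = l * (bt t : A) * ((c : A) * r)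
      have hc : (bt t : A) * (c : A) = (c : A) * (bt t : A) :=
        Subring.mem_centralizer_iff.mp c.2 _ (bt t).2
      rw [mul_assoc l (c : A) (bt t : A), ← hc, ← mul_assoc l, mul_assoc])

@[simp] lemma Imap_tmul {s : ℕ} (bt : Fin s → ↥B) (a a' : A) :
    Imap bt (tmul _ _ a a') = fun t => a * (bt t : A) * a' := rfl

lemma Imap_lact {s : ℕ} (bt : Fin s → ↥B) (a : A)
    (x : Tens (Subring.centralizer (B : Set A)).subtype (Subring.centralizer (B : Set A)).subtype) :
    Imap bt (lact _ _ a x) = fun t => a * Imap bt x t := by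
  induction x using tens_induction with
  | zero => simp only [map_zero]; funext t; rw [Pi.zero_apply, mul_zero]
  | tm l r =>
      rw [lact_tmul, Imap_tmul, Imap_tmul]
      funext t
      show (a * l) * (bt t : A) * r = a * (l * (bt t : A) * r)
      rw [mul_assoc a l, mul_assoc a]
  | add x y hx hy =>
      simp only [map_add, hx, hy]
      funext t
      simp only [Pi.add_apply]
      rw [mul_add]

lemma Imap_ract {s : ℕ} (bt : Fin s → ↥B) (a : A)
    (x : Tens (Subring.centralizer (B : Set A)).subtype (Subring.centralizer (B : Set A)).subtype) :
    Imap bt (ract _ _ a x) = fun t => Imap bt x t * a := by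
  induction x using tens_induction with
  | zero => simp only [map_zero]; funext t; rw [Pi.zero_apply, zero_mul]
  | tm l r =>
      rw [ract_tmul, Imap_tmul, Imap_tmul]
      funext t
      show l * (bt t : A) * (r * a) = (l * (bt t : A) * r) * a
      rw [mul_assoc (l * ((bt t : A))) r a]
  | add x y hx hy =>
      simp only [map_add, hx, hy]
      funext t
      simp only [Pi.add_apply]
      rw [add_mul]

/-- The retraction `A^s → A ⊗_R A`. -/
def Pmap {s n : ℕ} (σv : ↥B →ₗ[K] (Fin s → K))
    (π : Fin n → Tens (algebraMap K ↥B) (algebraMap K A)) (u : Fin n → A) :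
    (Fin s → A) →+
      Tens (Subring.centralizer (B : Set A)).subtype (Subring.centralizer (B : Set A)).subtype :=
  AddMonoidHom.mk' (fun v => ∑ k, tmul _ _ (PhiV σv v (π k)) (u k))
    (fun v w => by
      rw [← Finset.sum_add_distrib]
      exact Finset.sum_congr rfl fun k _ => by rw [PhiV_add, tmul_add_left])

@[simp] lemma Pmap_apply {s n : ℕ} (σv : ↥B →ₗ[K] (Fin s → K))
    (π : Fin n → Tens (algebraMap K ↥B) (algebraMap K A)) (u : Fin n → A) (v : Fin s → A) :
    Pmap σv π u v = ∑ k, tmul _ _ (PhiV σv v (π k)) (u k) := rfl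

end AuxSugano

noncomputable section
open NCT

/-- The tower `A ⊇ B ⊇ C` (given by injective ring maps `ι : C → B`, `j : B → A`) is
*left relative H-separable*: `B ⊗_C A ⊕ * ≅ A^n` as `B`-`A`-bimodules. -/
def LeftRelHSep {C B A : Type*} [Ring C] [Ring B] [Ring A]
    (ι : C →+* B) (j : B →+* A) (n : ℕ) : Prop :=
  ∃ (i : Tens ι (j.comp ι) →+ (Fin n → A)) (p : (Fin n → A) →+ Tens ι (j.comp ι)),
    (∀ (b : B) x, i (lact ι (j.comp ι) b x) = fun k => j b * i x k) ∧
    (∀ (a : A) x, i (ract ι (j.comp ι) a x) = fun k => i x k * a) ∧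
    (∀ (b : B) v, p (fun k => j b * v k) = lact ι (j.comp ι) b (p v)) ∧
    (∀ (a : A) v, p (fun k => v k * a) = ract ι (j.comp ι) a (p v)) ∧
    ∀ x, p (i x) = x

/-- `B` is a *left relative separable extension of `C` in `A`*: the multiplication map
`μ : B ⊗_C A → A` splits as a `B`-`A`-bimodule epimorphism. -/
def LeftRelSep {C B A : Type*} [Ring C] [Ring B] [Ring A]
    (ι : C →+* B) (j : B →+* A) : Prop :=
  ∃ σ : A →+ Tens ι (j.comp ι),
    (∀ (b : B) (a : A), σ (j b * a) = lact ι (j.comp ι) b (σ a)) ∧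
    (∀ (a a' : A), σ (a * a') = ract ι (j.comp ι) a' (σ a)) ∧
    ∀ a, mulMap ι (j.comp ι) j (fun _ => rfl) (σ a) = a

/-- `B ⊇ C` is a separable extension: there is a `B`-central element
`e ∈ B ⊗_C B` with `μ(e) = 1`. -/
def IsSepExt {C B : Type*} [Ring C] [Ring B] (ι : C →+* B) : Prop :=
  ∃ e : Tens ι ι, (∀ b : B, lact ι ι b e = ract ι ι b e) ∧
    mulMap ι ι (RingHom.id B) (fun _ => rfl) e = 1

set_option maxHeartbeats 1600000 in
/-- if `B` is a `K`-subalgebra of a `K`-algebra `A` with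
`B ⊗_K A ⊕ * ≅ A^n` as `B`-`A`-bimodules and `B` is finitely generated projective
over `K`, then `A` is an H-separable extension of the centralizer `R = A^B`. -/
theorem hSeparable_over_centralizer
    {K A : Type*} [CommRing K] [Ring A] [Algebra K A] (B : Subalgebra K A)
    [Module.Finite K ↥B] [Module.Projective K ↥B]
    (hgen : ∃ (n : ℕ)
        (i : Tens (algebraMap K ↥B) (algebraMap K A) →+ (Fin n → A))
        (p : (Fin n → A) →+ Tens (algebraMap K ↥B) (algebraMap K A)),
      (∀ (b : ↥B) x, i (lact (algebraMap K ↥B) (algebraMap K A) b x) = fun k => (b : A) * i x k) ∧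
      (∀ (a : A) x, i (ract (algebraMap K ↥B) (algebraMap K A) a x) = fun k => i x k * a) ∧
      (∀ (b : ↥B) v, p (fun k => (b : A) * v k) = lact (algebraMap K ↥B) (algebraMap K A) b (p v)) ∧
      (∀ (a : A) v, p (fun k => v k * a) = ract (algebraMap K ↥B) (algebraMap K A) a (p v)) ∧
      ∀ x, p (i x) = x) :
    ∃ (m : ℕ)
      (i : Tens (Subring.centralizer (B : Set A)).subtype
        (Subring.centralizer (B : Set A)).subtype →+ (Fin m → A))
      (p : (Fin m → A) →+ Tens (Subring.centralizer (B : Set A)).subtype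
        (Subring.centralizer (B : Set A)).subtype),
      (∀ (a : A) x, i (lact (Subring.centralizer (B : Set A)).subtype
        (Subring.centralizer (B : Set A)).subtype a x) = fun k => a * i x k) ∧
      (∀ (a : A) x, i (ract (Subring.centralizer (B : Set A)).subtype
        (Subring.centralizer (B : Set A)).subtype a x) = fun k => i x k * a) ∧
      (∀ (a : A) v, p (fun k => a * v k) = lact (Subring.centralizer (B : Set A)).subtype
        (Subring.centralizer (B : Set A)).subtype a (p v)) ∧
      (∀ (a : A) v, p (fun k => v k * a) = ract (Subring.centralizer (B : Set A)).subtype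
        (Subring.centralizer (B : Set A)).subtype a (p v)) ∧
      ∀ x, p (i x) = x := by
  classical
  obtain ⟨n, i, p, hi_l, hi_r, hp_l, hp_r, hpi⟩ := hgen
  obtain ⟨s, τ, hτsurj⟩ := Module.Finite.exists_fin' K ↥B
  obtain ⟨σv, hστ⟩ := Module.projective_lifting_property τ LinearMap.id hτsurj
  have hdb : ∀ b : ↥B, ∑ t, σv b t • τ (Pi.single t 1) = b := by
    intro b
    have h1 : ∀ t : Fin s, σv b t • τ (Pi.single t (1 : K)) = τ (Pi.single t (σv b t)) := by
      intro t
      rw [← map_smul, ← Pi.single_smul, smul_eq_mul, mul_one]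
    rw [Finset.sum_congr rfl fun t _ => h1 t, ← map_sum, Finset.univ_sum_single]
    exact LinearMap.congr_fun hστ b
  set bt : Fin s → ↥B := fun t => τ (Pi.single t 1) with hbt
  set π : Fin n → Tens (algebraMap K ↥B) (algebraMap K A) := fun k => p (Pi.single k 1) with hπ
  set u : Fin n → A := i (tmul (algebraMap K ↥B) (algebraMap K A) 1 1) with hu
  have hps : ∀ (k : Fin n) (c : A), p (Pi.single k c) = ract _ _ c (π k) := by
    intro k c
    have e : (Pi.single k c : Fin n → A) = fun k' => (Pi.single k (1 : A) : Fin n → A) k' * c := by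
      funext k'
      by_cases h : k' = k <;> simp [Pi.single_apply, h]
    rw [e]
    exact hp_r c (Pi.single k 1)
  have hpsum : ∀ v : Fin n → A, p v = ∑ k, ract _ _ (v k) (π k) := by
    intro v
    conv_lhs => rw [← Finset.univ_sum_single v]
    rw [map_sum]
    exact Finset.sum_congr rfl fun k _ => hps k (v k)
  have hdec : ∀ x, x = ∑ k, ract _ _ (i x k) (π k) := by
    intro x
    conv_lhs => rw [← hpi x]
    exact hpsum (i x)
  have hsum1 : ∑ k, ract _ _ (u k) (π k) = tmul (algebraMap K ↥B) (algebraMap K A) 1 1 :=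
    (hdec (tmul (algebraMap K ↥B) (algebraMap K A) 1 1)).symm
  have hπB : ∀ (b : ↥B) (k : Fin n), lact _ _ b (π k) = ract _ _ ((b : A)) (π k) := by
    intro b k
    have e : (fun k' => (b : A) * (Pi.single k (1 : A) : Fin n → A) k')
        = fun k' => (Pi.single k (1 : A) : Fin n → A) k' * (b : A) := by
      funext k'
      by_cases h : k' = k <;> simp [Pi.single_apply, h]
    have h1 := hp_l b (Pi.single k (1 : A))
    rw [e] at h1
    exact h1.symm.trans (hp_r (b : A) (Pi.single k (1 : A)))
  have hrS : ∀ k, muB B (π k) ∈ Subring.centralizer (B : Set A) := by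
    intro k
    rw [Subring.mem_centralizer_iff]
    intro g hg
    calc g * muB B (π k)
        = muB B (lact _ _ (⟨g, hg⟩ : ↥B) (π k)) := (muB_lact (⟨g, hg⟩ : ↥B) (π k)).symm
      _ = muB B (ract _ _ g (π k)) := by rw [hπB (⟨g, hg⟩ : ↥B) k]
      _ = muB B (π k) * g := muB_ract g (π k)
  have hsumru : ∑ k, muB B (π k) * u k = 1 := by
    calc ∑ k, muB B (π k) * u k
        = ∑ k, muB B (ract _ _ (u k) (π k)) :=
          Finset.sum_congr rfl fun k _ => (muB_ract (u k) (π k)).symm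
      _ = muB B (∑ k, ract _ _ (u k) (π k)) := (map_sum _ _ _).symm
      _ = muB B (tmul (algebraMap K ↥B) (algebraMap K A) 1 1) := by rw [hsum1]
      _ = 1 := by
          rw [show muB B (tmul (algebraMap K ↥B) (algebraMap K A) 1 1)
              = ((1 : ↥B) : A) * 1 from rfl]
          simp
  have hwS : ∀ (a : A) (k l : Fin n), i (mid a (π l)) k ∈ Subring.centralizer (B : Set A) := by
    intro a k l
    rw [Subring.mem_centralizer_iff]
    intro g hg
    calc g * i (mid a (π l)) k
        = i (lact _ _ (⟨g, hg⟩ : ↥B) (mid a (π l))) k :=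
          (congrFun (hi_l (⟨g, hg⟩ : ↥B) (mid a (π l))) k).symm
      _ = i (mid a (lact _ _ (⟨g, hg⟩ : ↥B) (π l))) k := by rw [mid_lact]
      _ = i (mid a (ract _ _ g (π l))) k := by rw [hπB (⟨g, hg⟩ : ↥B) l]
      _ = i (ract _ _ g (mid a (π l))) k := by rw [mid_ract]
      _ = i (mid a (π l)) k * g := congrFun (hi_r g (mid a (π l))) k
  have hwsum : ∀ (a : A) (k : Fin n), ∑ l, i (mid a (π l)) k * u l = u k * a := by
    intro a k
    have e : ∑ l, ract _ _ (u l) (mid a (π l)) = mid a (∑ l, ract _ _ (u l) (π l)) := by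
      rw [map_sum]
      exact Finset.sum_congr rfl fun l _ => (mid_ract a (u l) (π l)).symm
    calc ∑ l, i (mid a (π l)) k * u l
        = ∑ l, i (ract _ _ (u l) (mid a (π l))) k :=
          Finset.sum_congr rfl fun l _ => (congrFun (hi_r (u l) (mid a (π l))) k).symm
      _ = (∑ l, i (ract _ _ (u l) (mid a (π l)))) k := by rw [Finset.sum_apply]
      _ = i (∑ l, ract _ _ (u l) (mid a (π l))) k := by rw [map_sum]
      _ = i (mid a (tmul (algebraMap K ↥B) (algebraMap K A) 1 1)) k := by rw [e, hsum1]
      _ = i (ract _ _ a (tmul (algebraMap K ↥B) (algebraMap K A) 1 1)) k := by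
          rw [show mid a (tmul (algebraMap K ↥B) (algebraMap K A) 1 1)
              = tmul (algebraMap K ↥B) (algebraMap K A) 1 (a * 1) from rfl,
            show ract (algebraMap K ↥B) (algebraMap K A) a
                (tmul (algebraMap K ↥B) (algebraMap K A) 1 1)
              = tmul (algebraMap K ↥B) (algebraMap K A) 1 (1 * a) from rfl,
            mul_one, one_mul]
      _ = u k * a := congrFun (hi_r a (tmul (algebraMap K ↥B) (algebraMap K A) 1 1)) k
  have hmiddec : ∀ (a : A) (l : Fin n),
      mid a (π l) = ∑ k, ract _ _ (i (mid a (π l)) k) (π k) :=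
    fun a l => hdec (mid a (π l))
  have hPleft : ∀ (a : A) (v : Fin s → A),
      Pmap σv π u (fun t => a * v t) = lact _ _ a (Pmap σv π u v) := by
    intro a v
    rw [Pmap_apply, Pmap_apply, map_sum]
    refine Finset.sum_congr rfl fun k _ => ?_
    rw [PhiV_smul_left]
    exact (lact_tmul _ _ a _ (u k)).symm
  have hPright : ∀ (a : A) (v : Fin s → A),
      Pmap σv π u (fun t => v t * a) = ract _ _ a (Pmap σv π u v) := by
    intro a v
    calc Pmap σv π u (fun t => v t * a)
        = ∑ l, tmul _ _ (PhiV σv v (mid a (π l))) (u l) := by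
          rw [Pmap_apply]
          exact Finset.sum_congr rfl fun l _ => by rw [PhiV_mul_right]
      _ = ∑ l, tmul _ _ (PhiV σv v (∑ k, ract _ _ (i (mid a (π l)) k) (π k))) (u l) :=
          Finset.sum_congr rfl fun l _ => by rw [← hmiddec a l]
      _ = ∑ l, tmul _ _ (∑ k, PhiV σv v (π k) * i (mid a (π l)) k) (u l) := by
          refine Finset.sum_congr rfl fun l _ => ?_
          rw [map_sum]
          congr 1
          exact Finset.sum_congr rfl fun k _ => PhiV_ract σv v (i (mid a (π l)) k) (π k)
      _ = ∑ l, ∑ k, tmul _ _ (PhiV σv v (π k) * i (mid a (π l)) k) (u l) :=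
          Finset.sum_congr rfl fun l _ => map_sum (tmulLeft (Subring.centralizer (B : Set A)).subtype (Subring.centralizer (B : Set A)).subtype (u l)) _ _
      _ = ∑ k, ∑ l, tmul _ _ (PhiV σv v (π k) * i (mid a (π l)) k) (u l) := Finset.sum_comm
      _ = ∑ k, ∑ l, tmul _ _ (PhiV σv v (π k)) (i (mid a (π l)) k * u l) :=
          Finset.sum_congr rfl fun k _ => Finset.sum_congr rfl fun l _ =>
            tmul_rel (Subring.centralizer (B : Set A)).subtype (Subring.centralizer (B : Set A)).subtype
              (PhiV σv v (π k)) (⟨i (mid a (π l)) k, hwS a k l⟩) (u l)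
      _ = ∑ k, tmul _ _ (PhiV σv v (π k)) (∑ l, i (mid a (π l)) k * u l) :=
          Finset.sum_congr rfl fun k _ => (map_sum (tmulRight (Subring.centralizer (B : Set A)).subtype (Subring.centralizer (B : Set A)).subtype (PhiV σv v (π k))) _ _).symm
      _ = ∑ k, tmul _ _ (PhiV σv v (π k)) (u k * a) :=
          Finset.sum_congr rfl fun k _ => by rw [hwsum a k]
      _ = ract _ _ a (Pmap σv π u v) := by
          rw [Pmap_apply, map_sum]
          exact Finset.sum_congr rfl fun k _ => (ract_tmul _ _ a (u k) (PhiV σv v (π k))).symm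
  have hPbt : Pmap σv π u (fun t => (bt t : A))
      = tmul (Subring.centralizer (B : Set A)).subtype (Subring.centralizer (B : Set A)).subtype 1 1 := by
    have hμ : ∀ k, PhiV σv (fun t => (bt t : A)) (π k) = muB B (π k) := by
      intro k
      refine PhiV_eq_muB σv _ (fun b => ?_) (π k)
      have hc : ∑ t, σv b t • ((bt t : A)) = ((∑ t, σv b t • bt t : ↥B) : A) := by
        norm_cast
      rw [hc, hdb b]
    rw [Pmap_apply]
    calc ∑ k, tmul _ _ (PhiV σv (fun t => (bt t : A)) (π k)) (u k)
        = ∑ k, tmul _ _ 1 (muB B (π k) * u k) := by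
          refine Finset.sum_congr rfl fun k _ => ?_
          rw [hμ k]
          conv_lhs => rw [← one_mul (muB B (π k))]
          exact tmul_rel (Subring.centralizer (B : Set A)).subtype (Subring.centralizer (B : Set A)).subtype 1 (⟨muB B (π k), hrS k⟩) (u k)
      _ = tmul (Subring.centralizer (B : Set A)).subtype (Subring.centralizer (B : Set A)).subtype 1 (∑ k, muB B (π k) * u k) := (map_sum (tmulRight (Subring.centralizer (B : Set A)).subtype (Subring.centralizer (B : Set A)).subtype 1) _ _).symm
      _ = tmul _ _ 1 1 := by rw [hsumru]
  refine ⟨s, Imap bt, Pmap σv π u, fun a x => Imap_lact bt a x, fun a x => Imap_ract bt a x,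
    hPleft, hPright, ?_⟩
  intro x
  induction x using tens_induction with
  | zero => rw [map_zero, map_zero]
  | add x y hx hy => rw [map_add, map_add, hx, hy]
  | tm a a' =>
      rw [Imap_tmul]
      have e1 : (fun t => a * (bt t : A) * a') = fun t => a * ((bt t : A) * a') := by
        funext t; rw [mul_assoc]
      rw [e1,
        show Pmap σv π u (fun t => a * ((bt t : A) * a')) =
            lact _ _ a (Pmap σv π u (fun t => (bt t : A) * a')) from hPleft a _,
        show Pmap σv π u (fun t => (bt t : A) * a') =
            ract _ _ a' (Pmap σv π u (fun t => (bt t : A))) from hPright a' _,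
        hPbt, ract_tmul, lact_tmul, one_mul, mul_one]

end
end

section
/- Suppose A is a finitely generated projective algebra over a commutative ring K and B is a separable K-subalgebra of A such that A is a progenerator as a B-A-bimodule (equivalently, μ : B ⊗_K A → A splits and _B A_A is a generator). Then A ⊇ B is left normal, i.e., A ⊗_B A ⊕ * ≅ A^q as B-A-bimodules for some q ∈ ℕ (the left depth 2 condition). -/
/-!  A noncommutative relative tensor product `L ⊗_C R` for a ring `C` mapping
into rings `L` (acting on the right through `f`) and `R` (acting on the left
through `g`), together with the outer left `L`-action `lact`, the outer right
`R`-action `ract`, a lifting principle for balanced biadditive maps, and the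
multiplication map. -/

open scoped TensorProduct

noncomputable section
open NCT

section Aux

lemma homext {C L R P : Type*} [Ring C] [Ring L] [Ring R] [AddCommGroup P]
    (f : C →+* L) (g : C →+* R) (F G : Tens f g →+ P)
    (h : ∀ l r, F (tmul f g l r) = G (tmul f g l r)) : ∀ x, F x = G x :=
  tens_induction f g (by simp) h fun x y hx hy => by rw [map_add, map_add, hx, hy]

end Aux

section Main

variable {K A : Type*} [CommRing K] [Ring A] [Algebra K A] (B : Subalgebra K A)

/-- `A ⊗_K A → A ⊗_B A`. -/
def psiMap : Tens (algebraMap K A) (algebraMap K A) →+ Tens B.val.toRingHom B.val.toRingHom :=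
  lift _ _ (mkBilin (fun a a' => tmul B.val.toRingHom B.val.toRingHom a a')
      (fun a b r => tmul_add_left _ _ a b r)
      (fun a r s => tmul_add_right _ _ a r s))
    (fun a c a' => tmul_rel B.val.toRingHom B.val.toRingHom a (algebraMap K ↥B c) a')

@[simp] lemma psiMap_tmul (a a' : A) :
    psiMap B (tmul (algebraMap K A) (algebraMap K A) a a') =
      tmul B.val.toRingHom B.val.toRingHom a a' := rfl

lemma psiMap_lact (a₀ : A) (x : Tens (algebraMap K A) (algebraMap K A)) :
    psiMap B (lact _ _ a₀ x) = lact B.val.toRingHom B.val.toRingHom a₀ (psiMap B x) := by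
  exact homext _ _ ((psiMap B).comp (lact _ _ a₀))
    ((lact B.val.toRingHom B.val.toRingHom a₀).comp (psiMap B))
    (fun l r => by
      simp only [AddMonoidHom.coe_comp, Function.comp_apply, lact_tmul, psiMap_tmul]) x

lemma psiMap_ract (a₀ : A) (x : Tens (algebraMap K A) (algebraMap K A)) :
    psiMap B (ract _ _ a₀ x) = ract B.val.toRingHom B.val.toRingHom a₀ (psiMap B x) := by
  exact homext _ _ ((psiMap B).comp (ract _ _ a₀))
    ((ract B.val.toRingHom B.val.toRingHom a₀).comp (psiMap B))
    (fun l r => by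
      simp only [AddMonoidHom.coe_comp, Function.comp_apply, ract_tmul, psiMap_tmul]) x

/-- `B ⊗_K B → A ⊗_K A`, `b ⊗ b' ↦ (a b) ⊗ (b' a')`. -/
def Fmap (a a' : A) : Tens (algebraMap K ↥B) (algebraMap K ↥B) →+
    Tens (algebraMap K A) (algebraMap K A) :=
  lift _ _ (mkBilin (fun b b' =>
        tmul (algebraMap K A) (algebraMap K A) (a * (b : A)) ((b' : A) * a'))
      (fun b b₂ r => by push_cast; rw [mul_add, tmul_add_left])
      (fun b r s => by push_cast; rw [add_mul, tmul_add_right]))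
    (fun b c b' => by
      simp only [mkBilin_apply]
      push_cast
      rw [← mul_assoc a, mul_assoc (algebraMap K A c)]
      exact tmul_rel _ _ (a * (b : A)) c ((b' : A) * a'))

@[simp] lemma Fmap_tmul (a a' : A) (b b' : ↥B) :
    Fmap B a a' (tmul (algebraMap K ↥B) (algebraMap K ↥B) b b') =
      tmul (algebraMap K A) (algebraMap K A) (a * (b : A)) ((b' : A) * a') := rfl

lemma Fmap_add_left (a a₂ a' : A) (x : Tens (algebraMap K ↥B) (algebraMap K ↥B)) :
    Fmap B (a + a₂) a' x = Fmap B a a' x + Fmap B a₂ a' x := by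
  exact homext _ _ (Fmap B (a + a₂) a') (Fmap B a a' + Fmap B a₂ a')
    (fun b b' => by
      simp only [Fmap_tmul, AddMonoidHom.add_apply]
      rw [add_mul, tmul_add_left]) x

lemma Fmap_add_right (a a' a₂ : A) (x : Tens (algebraMap K ↥B) (algebraMap K ↥B)) :
    Fmap B a (a' + a₂) x = Fmap B a a' x + Fmap B a a₂ x := by
  exact homext _ _ (Fmap B a (a' + a₂)) (Fmap B a a' + Fmap B a a₂)
    (fun b b' => by
      simp only [Fmap_tmul, AddMonoidHom.add_apply]
      rw [mul_add, tmul_add_right]) x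

lemma Fmap_lact (a a' : A) (b : ↥B) (x : Tens (algebraMap K ↥B) (algebraMap K ↥B)) :
    Fmap B a a' (lact _ _ b x) = Fmap B (a * (b : A)) a' x := by
  exact homext _ _ ((Fmap B a a').comp (lact _ _ b)) (Fmap B (a * (b : A)) a')
    (fun b₁ b₂ => by
      simp only [AddMonoidHom.coe_comp, Function.comp_apply, lact_tmul, Fmap_tmul]
      push_cast
      rw [mul_assoc]) x

lemma Fmap_ract (a a' : A) (b : ↥B) (x : Tens (algebraMap K ↥B) (algebraMap K ↥B)) :
    Fmap B a a' (ract _ _ b x) = Fmap B a ((b : A) * a') x := by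
  exact homext _ _ ((Fmap B a a').comp (ract _ _ b)) (Fmap B a ((b : A) * a'))
    (fun b₁ b₂ => by
      simp only [AddMonoidHom.coe_comp, Function.comp_apply, ract_tmul, Fmap_tmul]
      push_cast
      rw [mul_assoc]) x

lemma Fmap_outer_lact (a a' a₀ : A) (x : Tens (algebraMap K ↥B) (algebraMap K ↥B)) :
    lact (algebraMap K A) (algebraMap K A) a₀ (Fmap B a a' x) = Fmap B (a₀ * a) a' x := by
  exact homext _ _ ((lact (algebraMap K A) (algebraMap K A) a₀).comp (Fmap B a a'))
    (Fmap B (a₀ * a) a')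
    (fun b₁ b₂ => by
      simp only [AddMonoidHom.coe_comp, Function.comp_apply, Fmap_tmul, lact_tmul]
      rw [mul_assoc]) x

lemma Fmap_outer_ract (a a' a₀ : A) (x : Tens (algebraMap K ↥B) (algebraMap K ↥B)) :
    ract (algebraMap K A) (algebraMap K A) a₀ (Fmap B a a' x) = Fmap B a (a' * a₀) x := by
  exact homext _ _ ((ract (algebraMap K A) (algebraMap K A) a₀).comp (Fmap B a a'))
    (Fmap B a (a' * a₀))
    (fun b₁ b₂ => by
      simp only [AddMonoidHom.coe_comp, Function.comp_apply, Fmap_tmul, ract_tmul]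
      rw [mul_assoc]) x

/-- `A ⊗_B A → A ⊗_K A` given a separability idempotent `e`. -/
def phiMap (e : Tens (algebraMap K ↥B) (algebraMap K ↥B))
    (he : ∀ b : ↥B, lact _ _ b e = ract _ _ b e) :
    Tens B.val.toRingHom B.val.toRingHom →+ Tens (algebraMap K A) (algebraMap K A) :=
  lift _ _ (mkBilin (fun a a' => Fmap B a a' e)
      (fun a a₂ a' => by rw [Fmap_add_left])
      (fun a a' a₂ => by rw [Fmap_add_right]))
    (fun a b a' => by
      simp only [mkBilin_apply]
      have hb : B.val.toRingHom b = (b : A) := rfl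
      rw [hb, ← Fmap_lact, he, Fmap_ract])

@[simp] lemma phiMap_tmul (e he) (a a' : A) :
    phiMap B e he (tmul B.val.toRingHom B.val.toRingHom a a') = Fmap B a a' e := rfl

lemma phiMap_lact (e he) (a₀ : A) (x : Tens B.val.toRingHom B.val.toRingHom) :
    phiMap B e he (lact _ _ a₀ x) =
      lact (algebraMap K A) (algebraMap K A) a₀ (phiMap B e he x) := by
  exact homext _ _ ((phiMap B e he).comp (lact _ _ a₀))
    ((lact (algebraMap K A) (algebraMap K A) a₀).comp (phiMap B e he))
    (fun a a' => by
      simp only [AddMonoidHom.coe_comp, Function.comp_apply, lact_tmul, phiMap_tmul]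
      rw [Fmap_outer_lact]) x

lemma phiMap_ract (e he) (a₀ : A) (x : Tens B.val.toRingHom B.val.toRingHom) :
    phiMap B e he (ract _ _ a₀ x) =
      ract (algebraMap K A) (algebraMap K A) a₀ (phiMap B e he x) := by
  exact homext _ _ ((phiMap B e he).comp (ract _ _ a₀))
    ((ract (algebraMap K A) (algebraMap K A) a₀).comp (phiMap B e he))
    (fun a a' => by
      simp only [AddMonoidHom.coe_comp, Function.comp_apply, ract_tmul, phiMap_tmul]
      rw [Fmap_outer_ract]) x

/-- `↥B →+ A ⊗_B A`, `c ↦ a ⊗ (c a')`. -/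
def toTm (a a' : A) : ↥B →+ Tens B.val.toRingHom B.val.toRingHom :=
  AddMonoidHom.mk' (fun c => tmul B.val.toRingHom B.val.toRingHom a ((c : A) * a'))
    (fun c c' => by push_cast; rw [add_mul, tmul_add_right])

lemma psiMap_Fmap (a a' : A) (x : Tens (algebraMap K ↥B) (algebraMap K ↥B)) :
    psiMap B (Fmap B a a' x) =
      toTm B a a' (mulMap (algebraMap K ↥B) (algebraMap K ↥B) (RingHom.id ↥B) (fun _ => rfl) x) := by
  exact homext _ _ ((psiMap B).comp (Fmap B a a'))
    ((toTm B a a').comp (mulMap (algebraMap K ↥B) (algebraMap K ↥B) (RingHom.id ↥B) (fun _ => rfl)))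
    (fun b b' => by
      simp only [AddMonoidHom.coe_comp, Function.comp_apply, Fmap_tmul, psiMap_tmul,
        mulMap_tmul, RingHom.id_apply, toTm, AddMonoidHom.mk'_apply]
      have hrel : tmul B.val.toRingHom B.val.toRingHom (a * (b : A)) ((b' : A) * a')
          = tmul B.val.toRingHom B.val.toRingHom a ((b : A) * ((b' : A) * a')) :=
        tmul_rel B.val.toRingHom B.val.toRingHom a b ((b' : A) * a')
      rw [hrel]
      push_cast
      rw [mul_assoc]) x

lemma psiMap_phiMap (e he)
    (hmu : mulMap (algebraMap K ↥B) (algebraMap K ↥B) (RingHom.id ↥B) (fun _ => rfl) e = 1)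
    (x : Tens B.val.toRingHom B.val.toRingHom) :
    psiMap B (phiMap B e he x) = x := by
  exact homext _ _ ((psiMap B).comp (phiMap B e he)) (AddMonoidHom.id _)
    (fun a a' => by
      simp only [AddMonoidHom.coe_comp, Function.comp_apply, phiMap_tmul,
        AddMonoidHom.id_apply]
      rw [psiMap_Fmap, hmu]
      show tmul _ _ a (((1 : ↥B) : A) * a') = _
      simp) x

end Main
section Main2

variable {K A : Type*} [CommRing K] [Ring A] [Algebra K A] (B : Subalgebra K A) {m : ℕ}

/-- `B ⊗_K A →+ B`, `b ⊗ x ↦ b * ι (u x k)`. -/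
def Mmap (u : A →ₗ[K] (Fin m → K)) (k : Fin m) :
    Tens (algebraMap K ↥B) (algebraMap K A) →+ ↥B :=
  lift _ _ (mkBilin (fun b x => b * algebraMap K ↥B (u x k))
      (fun b b₂ x => by rw [add_mul])
      (fun b x x₂ => by rw [map_add, Pi.add_apply, map_add, mul_add]))
    (fun b c x => by
      simp only [mkBilin_apply]
      have : u ((algebraMap K A) c * x) = c • u x := by
        rw [← Algebra.smul_def, map_smul]
      rw [this, Pi.smul_apply, smul_eq_mul, map_mul, mul_assoc])

@[simp] lemma Mmap_tmul (u : A →ₗ[K] (Fin m → K)) (k : Fin m) (b : ↥B) (x : A) :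
    Mmap B u k (tmul (algebraMap K ↥B) (algebraMap K A) b x) =
      b * algebraMap K ↥B (u x k) := rfl

lemma Mmap_lact (u : A →ₗ[K] (Fin m → K)) (k : Fin m) (b : ↥B)
    (y : Tens (algebraMap K ↥B) (algebraMap K A)) :
    Mmap B u k (lact _ _ b y) = b * Mmap B u k y := by
  exact homext _ _ ((Mmap B u k).comp (lact _ _ b))
    ((AddMonoidHom.mulLeft b).comp (Mmap B u k))
    (fun b₁ x => by
      simp only [AddMonoidHom.coe_comp, Function.comp_apply, lact_tmul, Mmap_tmul,
        AddMonoidHom.coe_mulLeft]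
      rw [mul_assoc]) y

lemma Mmap_ract_alg (u : A →ₗ[K] (Fin m → K)) (k : Fin m) (c : K)
    (y : Tens (algebraMap K ↥B) (algebraMap K A)) :
    Mmap B u k (ract _ _ (algebraMap K A c) y) = Mmap B u k y * algebraMap K ↥B c := by
  exact homext _ _ ((Mmap B u k).comp (ract _ _ (algebraMap K A c)))
    ((AddMonoidHom.mulRight (algebraMap K ↥B c)).comp (Mmap B u k))
    (fun b x => by
      simp only [AddMonoidHom.coe_comp, Function.comp_apply, ract_tmul, Mmap_tmul,
        AddMonoidHom.coe_mulRight, Function.comp_apply]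
      have h1 : x * algebraMap K A c = algebraMap K A c * x := (Algebra.commutes c x).symm
      have h2 : u ((algebraMap K A) c * x) = c • u x := by
        rw [← Algebra.smul_def, map_smul]
      rw [h1, h2, Pi.smul_apply, smul_eq_mul, map_mul,
        Algebra.commutes c (algebraMap K ↥B (u x k)), ← mul_assoc]) y

/-- `B ⊗_K A →+ A ⊗_K A`, `b ⊗ x ↦ (b * v e_k) ⊗ x`. -/
def Nmap (v : (Fin m → K) →ₗ[K] A) (k : Fin m) :
    Tens (algebraMap K ↥B) (algebraMap K A) →+ Tens (algebraMap K A) (algebraMap K A) :=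
  lift _ _ (mkBilin (fun b x =>
        tmul (algebraMap K A) (algebraMap K A) ((b : A) * v (fun j => if k = j then 1 else 0)) x)
      (fun b b₂ x => by push_cast; rw [add_mul, tmul_add_left])
      (fun b x x₂ => by rw [tmul_add_right]))
    (fun b c x => by
      simp only [mkBilin_apply]
      have h1 : ((b * algebraMap K ↥B c : ↥B) : A) * v (fun j => if k = j then 1 else 0)
          = ((b : A) * v (fun j => if k = j then 1 else 0)) * algebraMap K A c := by
        push_cast
        rw [mul_assoc, mul_assoc, Algebra.commutes]
      rw [h1]
      exact tmul_rel _ _ _ c x)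

@[simp] lemma Nmap_tmul (v : (Fin m → K) →ₗ[K] A) (k : Fin m) (b : ↥B) (x : A) :
    Nmap B v k (tmul (algebraMap K ↥B) (algebraMap K A) b x) =
      tmul (algebraMap K A) (algebraMap K A)
        ((b : A) * v (fun j => if k = j then 1 else 0)) x := rfl

end Main2
section Main3

variable {K A : Type*} [CommRing K] [Ring A] [Algebra K A] (B : Subalgebra K A) {m : ℕ}

/-- Pointwise application of a family of additive maps. -/
def piHom {ι : Type*} {M N : Type*} [AddCommGroup M] [AddCommGroup N]
    (F : ι → (M →+ N)) : (ι → M) →+ (ι → N) :=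
  AddMonoidHom.mk' (fun w k => F k (w k))
    (fun w w' => funext fun k => by simp)

@[simp] lemma piHom_apply {ι : Type*} {M N : Type*} [AddCommGroup M] [AddCommGroup N]
    (F : ι → (M →+ N)) (w : ι → M) (k : ι) : piHom F w k = F k (w k) := rfl

/-- `A ⊗_K A →+ (B ⊗_K A)^m` built from a splitting `σ` of `μ` and coordinates `u`. -/
def Phimap (σ : A →+ Tens (algebraMap K ↥B) (algebraMap K A))
    (hσ : ∀ a a' : A, σ (a * a') = ract (algebraMap K ↥B) (algebraMap K A) a' (σ a))
    (u : A →ₗ[K] (Fin m → K)) :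
    Tens (algebraMap K A) (algebraMap K A) →+
      (Fin m → Tens (algebraMap K ↥B) (algebraMap K A)) :=
  lift _ _ (mkBilin
      (fun a a' k => tmul (algebraMap K ↥B) (algebraMap K A) (Mmap B u k (σ a)) a')
      (fun a a₂ a' => funext fun k => by
        simp only [Pi.add_apply]
        rw [map_add, map_add, tmul_add_left])
      (fun a a' a₂ => funext fun k => by
        simp only [Pi.add_apply]
        rw [tmul_add_right]))
    (fun a c a' => by
      simp only [mkBilin_apply]
      funext k
      rw [hσ, Mmap_ract_alg]
      exact tmul_rel _ _ _ c a')

@[simp] lemma Phimap_tmul (σ hσ) (u : A →ₗ[K] (Fin m → K)) (a a' : A) :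
    Phimap B σ hσ u (tmul (algebraMap K A) (algebraMap K A) a a') =
      fun k => tmul (algebraMap K ↥B) (algebraMap K A) (Mmap B u k (σ a)) a' := rfl

lemma Phimap_lact (σ hσ) (u : A →ₗ[K] (Fin m → K))
    (hσ1 : ∀ (b : ↥B) (a : A), σ ((b : A) * a) = lact (algebraMap K ↥B) (algebraMap K A) b (σ a))
    (b : ↥B) (x : Tens (algebraMap K A) (algebraMap K A)) :
    Phimap B σ hσ u (lact (algebraMap K A) (algebraMap K A) (b : A) x) =
      fun k => lact (algebraMap K ↥B) (algebraMap K A) b (Phimap B σ hσ u x k) := by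
  exact homext _ _ ((Phimap B σ hσ u).comp (lact _ _ (b : A)))
    ((piHom (fun k => lact (algebraMap K ↥B) (algebraMap K A) b)).comp (Phimap B σ hσ u))
    (fun a a' => by
      simp only [AddMonoidHom.coe_comp, Function.comp_apply, lact_tmul, Phimap_tmul]
      funext k
      simp only [piHom_apply, lact_tmul]
      rw [hσ1, Mmap_lact]) x

lemma Phimap_ract (σ hσ) (u : A →ₗ[K] (Fin m → K)) (a₀ : A)
    (x : Tens (algebraMap K A) (algebraMap K A)) :
    Phimap B σ hσ u (ract (algebraMap K A) (algebraMap K A) a₀ x) =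
      fun k => ract (algebraMap K ↥B) (algebraMap K A) a₀ (Phimap B σ hσ u x k) := by
  exact homext _ _ ((Phimap B σ hσ u).comp (ract _ _ a₀))
    ((piHom (fun k => ract (algebraMap K ↥B) (algebraMap K A) a₀)).comp (Phimap B σ hσ u))
    (fun a a' => by
      simp only [AddMonoidHom.coe_comp, Function.comp_apply, ract_tmul, Phimap_tmul]
      funext k
      simp only [piHom_apply, ract_tmul]) x

/-- `(B ⊗_K A)^m →+ A ⊗_K A`. -/
def Psimap (v : (Fin m → K) →ₗ[K] A) :
    (Fin m → Tens (algebraMap K ↥B) (algebraMap K A)) →+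
      Tens (algebraMap K A) (algebraMap K A) :=
  ∑ k : Fin m, (Nmap B v k).comp
    (Pi.evalAddMonoidHom (fun _ : Fin m => Tens (algebraMap K ↥B) (algebraMap K A)) k)

lemma Psimap_apply (v : (Fin m → K) →ₗ[K] A)
    (w : Fin m → Tens (algebraMap K ↥B) (algebraMap K A)) :
    Psimap B v w = ∑ k : Fin m, Nmap B v k (w k) := by
  simp [Psimap, AddMonoidHom.finset_sum_apply]

lemma Nmap_lact (v : (Fin m → K) →ₗ[K] A) (k : Fin m) (b : ↥B)
    (y : Tens (algebraMap K ↥B) (algebraMap K A)) :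
    Nmap B v k (lact _ _ b y) = lact (algebraMap K A) (algebraMap K A) (b : A) (Nmap B v k y) := by
  exact homext _ _ ((Nmap B v k).comp (lact _ _ b))
    ((lact (algebraMap K A) (algebraMap K A) (b : A)).comp (Nmap B v k))
    (fun b₁ x => by
      simp only [AddMonoidHom.coe_comp, Function.comp_apply, lact_tmul, Nmap_tmul]
      push_cast
      rw [mul_assoc]) y

lemma Nmap_ract (v : (Fin m → K) →ₗ[K] A) (k : Fin m) (a₀ : A)
    (y : Tens (algebraMap K ↥B) (algebraMap K A)) :
    Nmap B v k (ract _ _ a₀ y) = ract (algebraMap K A) (algebraMap K A) a₀ (Nmap B v k y) := by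
  exact homext _ _ ((Nmap B v k).comp (ract _ _ a₀))
    ((ract (algebraMap K A) (algebraMap K A) a₀).comp (Nmap B v k))
    (fun b₁ x => by
      simp only [AddMonoidHom.coe_comp, Function.comp_apply, ract_tmul, Nmap_tmul]) y

lemma Psimap_lact (v : (Fin m → K) →ₗ[K] A) (b : ↥B)
    (w : Fin m → Tens (algebraMap K ↥B) (algebraMap K A)) :
    Psimap B v (fun k => lact (algebraMap K ↥B) (algebraMap K A) b (w k)) =
      lact (algebraMap K A) (algebraMap K A) (b : A) (Psimap B v w) := by
  rw [Psimap_apply, Psimap_apply, map_sum]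
  exact Finset.sum_congr rfl (fun k _ => Nmap_lact B v k b (w k))

lemma Psimap_ract (v : (Fin m → K) →ₗ[K] A) (a₀ : A)
    (w : Fin m → Tens (algebraMap K ↥B) (algebraMap K A)) :
    Psimap B v (fun k => ract (algebraMap K ↥B) (algebraMap K A) a₀ (w k)) =
      ract (algebraMap K A) (algebraMap K A) a₀ (Psimap B v w) := by
  rw [Psimap_apply, Psimap_apply, map_sum]
  exact Finset.sum_congr rfl (fun k _ => Nmap_ract B v k a₀ (w k))

/-- `↥B →+ B ⊗_K A`, `b ↦ b ⊗ a'`. -/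
def tmL (a' : A) : ↥B →+ Tens (algebraMap K ↥B) (algebraMap K A) :=
  AddMonoidHom.mk' (fun b => tmul (algebraMap K ↥B) (algebraMap K A) b a')
    (fun b b' => tmul_add_left _ _ b b' a')

/-- `A →+ A ⊗_K A`, `a ↦ a ⊗ a'`. -/
def tmA (a' : A) : A →+ Tens (algebraMap K A) (algebraMap K A) :=
  AddMonoidHom.mk' (fun a => tmul (algebraMap K A) (algebraMap K A) a a')
    (fun a b => tmul_add_left _ _ a b a')

lemma key_sum (u : A →ₗ[K] (Fin m → K)) (v : (Fin m → K) →ₗ[K] A)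
    (hv : ∀ x : A, v (u x) = x) (a' : A)
    (y : Tens (algebraMap K ↥B) (algebraMap K A)) :
    ∑ k : Fin m, Nmap B v k (tmul (algebraMap K ↥B) (algebraMap K A) (Mmap B u k y) a') =
      tmul (algebraMap K A) (algebraMap K A)
        (mulMap (algebraMap K ↥B) (algebraMap K A) B.val.toRingHom (fun _ => rfl) y) a' := by
  have h := homext _ _
    (∑ k : Fin m, (Nmap B v k).comp ((tmL B a').comp (Mmap B u k)))
    ((tmA a').comp (mulMap (algebraMap K ↥B) (algebraMap K A) B.val.toRingHom (fun _ => rfl)))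
    (fun b x => by
      simp only [AddMonoidHom.finset_sum_apply, AddMonoidHom.coe_comp, Function.comp_apply,
        Mmap_tmul, mulMap_tmul]
      show ∑ k : Fin m,
          Nmap B v k (tmul (algebraMap K ↥B) (algebraMap K A) (b * algebraMap K ↥B (u x k)) a')
        = tmul (algebraMap K A) (algebraMap K A) (B.val.toRingHom b * x) a'
      have hsummand : ∀ k : Fin m,
          Nmap B v k (tmul (algebraMap K ↥B) (algebraMap K A) (b * algebraMap K ↥B (u x k)) a')
            = tmA a' ((b : A) * (u x k • v (fun j => if k = j then 1 else 0))) := by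
        intro k
        simp only [Nmap_tmul, tmA, AddMonoidHom.mk'_apply]
        push_cast
        rw [mul_assoc, Algebra.smul_def]
      rw [Finset.sum_congr rfl (fun k _ => hsummand k), ← map_sum, ← Finset.mul_sum,
        ← LinearMap.pi_apply_eq_sum_univ v (u x), hv]
      rfl) y
  simpa [AddMonoidHom.finset_sum_apply, tmA, tmL, AddMonoidHom.mk'_apply] using h

lemma Psimap_Phimap (σ : A →+ Tens (algebraMap K ↥B) (algebraMap K A))
    (hσ : ∀ a a' : A, σ (a * a') = ract (algebraMap K ↥B) (algebraMap K A) a' (σ a))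
    (hσ3 : ∀ a, mulMap (algebraMap K ↥B) (algebraMap K A) B.val.toRingHom (fun _ => rfl) (σ a) = a)
    (u : A →ₗ[K] (Fin m → K)) (v : (Fin m → K) →ₗ[K] A)
    (hv : ∀ x : A, v (u x) = x)
    (x : Tens (algebraMap K A) (algebraMap K A)) :
    Psimap B v (Phimap B σ hσ u x) = x := by
  exact homext _ _ ((Psimap B v).comp (Phimap B σ hσ u)) (AddMonoidHom.id _)
    (fun a a' => by
      simp only [AddMonoidHom.coe_comp, Function.comp_apply, Phimap_tmul,
        AddMonoidHom.id_apply]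
      rw [Psimap_apply, key_sum B u v hv a' (σ a), hσ3]) x

end Main3
/-- if `A` is a finitely generated projective algebra over a commutative
ring `K`, `B` is a separable `K`-subalgebra of `A`, and `A` is a progenerator
`B`-`A`-bimodule (`μ : B ⊗_K A → A` splits as `B`-`A`-bimodules and `_B A _A` is a
generator), then `A ⊇ B` is left normal: `A ⊗_B A ⊕ * ≅ A^q` as `B`-`A`-bimodules. -/
theorem leftNormal_of_progenerator
    {K A : Type*} [CommRing K] [Ring A] [Algebra K A]
    [Module.Finite K A] [Module.Projective K A]
    (B : Subalgebra K A)
    -- `B` is a separable `K`-algebra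
    (hsep : ∃ e : Tens (algebraMap K ↥B) (algebraMap K ↥B),
      (∀ b : ↥B, lact (algebraMap K ↥B) (algebraMap K ↥B) b e =
        ract (algebraMap K ↥B) (algebraMap K ↥B) b e) ∧
      mulMap (algebraMap K ↥B) (algebraMap K ↥B) (RingHom.id ↥B) (fun _ => rfl) e = 1)
    -- `μ : B ⊗_K A → A` splits as a `B`-`A`-bimodule epimorphism
    (hsplit : ∃ σ : A →+ Tens (algebraMap K ↥B) (algebraMap K A),
      (∀ (b : ↥B) (a : A), σ ((b : A) * a) =
        lact (algebraMap K ↥B) (algebraMap K A) b (σ a)) ∧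
      (∀ (a a' : A), σ (a * a') = ract (algebraMap K ↥B) (algebraMap K A) a' (σ a)) ∧
      ∀ a, mulMap (algebraMap K ↥B) (algebraMap K A) B.val.toRingHom (fun _ => rfl) (σ a) = a)
    -- `_B A _A` is a generator: the regular bimodule is a direct summand of a power of `A`
    (hgen : ∃ (n : ℕ)
        (i : Tens (algebraMap K ↥B) (algebraMap K A) →+ (Fin n → A))
        (p : (Fin n → A) →+ Tens (algebraMap K ↥B) (algebraMap K A)),
      (∀ (b : ↥B) x, i (lact (algebraMap K ↥B) (algebraMap K A) b x) = fun k => (b : A) * i x k) ∧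
      (∀ (a : A) x, i (ract (algebraMap K ↥B) (algebraMap K A) a x) = fun k => i x k * a) ∧
      (∀ (b : ↥B) v, p (fun k => (b : A) * v k) = lact (algebraMap K ↥B) (algebraMap K A) b (p v)) ∧
      (∀ (a : A) v, p (fun k => v k * a) = ract (algebraMap K ↥B) (algebraMap K A) a (p v)) ∧
      ∀ x, p (i x) = x) :
    ∃ (q : ℕ)
      (i : Tens B.val.toRingHom B.val.toRingHom →+ (Fin q → A))
      (p : (Fin q → A) →+ Tens B.val.toRingHom B.val.toRingHom),
      (∀ (b : ↥B) x, i (lact B.val.toRingHom B.val.toRingHom (b : A) x) = fun k => (b : A) * i x k) ∧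
      (∀ (a : A) x, i (ract B.val.toRingHom B.val.toRingHom a x) = fun k => i x k * a) ∧
      (∀ (b : ↥B) v, p (fun k => (b : A) * v k) = lact B.val.toRingHom B.val.toRingHom (b : A) (p v)) ∧
      (∀ (a : A) v, p (fun k => v k * a) = ract B.val.toRingHom B.val.toRingHom a (p v)) ∧
      ∀ x, p (i x) = x := by
  obtain ⟨e, he, hmu⟩ := hsep
  obtain ⟨σ, hσ1, hσ2, hσ3⟩ := hsplit
  obtain ⟨n, i, p, hi1, hi2, hp1, hp2, hpi⟩ := hgen
  obtain ⟨m, v, hv⟩ := Module.Finite.exists_fin' K A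
  obtain ⟨u, hu⟩ := Module.projective_lifting_property v LinearMap.id hv
  have hvu : ∀ x : A, v (u x) = x := fun x => DFunLike.congr_fun hu x
  refine ⟨m * n,
    AddMonoidHom.mk' (fun x t => i (Phimap B σ hσ2 u (phiMap B e he x)
        (finProdFinEquiv.symm t).1) (finProdFinEquiv.symm t).2)
      (fun x y => funext fun t => by
        beta_reduce
        rw [map_add, map_add, Pi.add_apply, map_add, Pi.add_apply]
        rfl),
    AddMonoidHom.mk' (fun w => psiMap B (Psimap B v
        (fun k => p (fun l => w (finProdFinEquiv (k, l))))))
      (fun w w' => by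
        beta_reduce
        have harg : (fun k => p fun l => (w + w') (finProdFinEquiv (k, l)))
            = (fun k => p fun l => w (finProdFinEquiv (k, l)))
              + fun k => p fun l => w' (finProdFinEquiv (k, l)) := by
          funext k
          rw [Pi.add_apply, ← map_add]
          rfl
        rw [harg, map_add, map_add]),
    ?_, ?_, ?_, ?_, ?_⟩
  · intro b x
    funext t
    simp only [AddMonoidHom.mk'_apply]
    rw [phiMap_lact, Phimap_lact B σ hσ2 u hσ1, hi1]
  · intro a x
    funext t
    simp only [AddMonoidHom.mk'_apply]
    rw [phiMap_ract, Phimap_ract, hi2]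
  · intro b w
    simp only [AddMonoidHom.mk'_apply]
    simp only [hp1]
    rw [Psimap_lact, psiMap_lact]
  · intro a w
    simp only [AddMonoidHom.mk'_apply]
    simp only [hp2]
    rw [Psimap_ract, psiMap_ract]
  · intro x
    simp only [AddMonoidHom.mk'_apply, Equiv.symm_apply_apply]
    have harg : (fun k => p fun l =>
        i (Phimap B σ hσ2 u (phiMap B e he x) k) l) = Phimap B σ hσ2 u (phiMap B e he x) := by
      funext k
      exact hpi _
    rw [harg, Psimap_Phimap B σ hσ2 hσ3 u v hvu, psiMap_phiMap B e he hmu]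

end
end

section
/- Suppose a tower of rings A ⊇ B ⊇ C satisfies both the left relative H-separability condition (B ⊗_C A ⊕ * ≅ A^n as B-A-bimodules) and the left relative separability condition (A ⊕ * ≅ B ⊗_C A as B-A-bimodules). Then for every m ≥ 1 the A-A-bimodules A^{⊗_B m} and A^{⊗_C m} are H-equivalent (each is isomorphic to a direct summand of a finite direct sum of copies of the other). -/
/-!  A noncommutative relative tensor product `L ⊗_C R` for a ring `C` mapping
into rings `L` (acting on the right through `f`) and `R` (acting on the left
through `g`), together with the outer left `L`-action `lact`, the outer right
`R`-action `ract`, a lifting principle for balanced biadditive maps, and the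
multiplication map. -/

open scoped TensorProduct

noncomputable section
open NCT

section TensorPowers

variable (A : Type*) [Ring A]

def ZM : ℕ → ModuleCat ℤ
  | 0 => ModuleCat.of ℤ A
  | n + 1 => ModuleCat.of ℤ (A ⊗[ℤ] (ZM n))

abbrev Zc (n : ℕ) : Type _ := (ZM A n : Type _)

def lactZ : ∀ n : ℕ, A → Zc A n →+ Zc A n
  | 0, a => (AddMonoidHom.mulLeft a : A →+ A)
  | n + 1, a =>
      (LinearMap.rTensor (ZM A n) (AddMonoidHom.mulLeft a).toIntLinearMap).toAddMonoidHom

/-- An additive endomorphism of a `ℤ`-module object, viewed as a `ℤ`-linear map for the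
module structure carried by the object (the port of `AddMonoidHom.toIntLinearMap`). -/
def toZLin {M : ModuleCat ℤ} (f : M →+ M) : M →ₗ[ℤ] M where
  toFun := f
  map_add' := map_add f
  map_smul' := fun c x =>
    (congrArg f (int_smul_eq_zsmul M.isModule c x)).trans
      ((map_zsmul f c x).trans (int_smul_eq_zsmul M.isModule c _).symm)

@[simp] lemma coe_toZLin {M : ModuleCat ℤ} (f : M →+ M) : ⇑(toZLin f) = f := rfl

def ractZ : ∀ n : ℕ, A → Zc A n →+ Zc A n
  | 0, a => (AddMonoidHom.mulRight a : A →+ A)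
  | n + 1, a => (LinearMap.lTensor A (toZLin (ractZ n a))).toAddMonoidHom

lemma lactZ_zero (a x : A) : lactZ A 0 a x = a * x := rfl
lemma ractZ_zero (a x : A) : ractZ A 0 a x = x * a := rfl

lemma lactZ_succ (n : ℕ) (a : A) (x : A) (y : Zc A n) :
    lactZ A (n + 1) a (x ⊗ₜ[ℤ] y) = (a * x) ⊗ₜ[ℤ] y := rfl

lemma ractZ_succ (n : ℕ) (a : A) (x : A) (y : Zc A n) :
    ractZ A (n + 1) a (x ⊗ₜ[ℤ] y) = x ⊗ₜ[ℤ] (ractZ A n a y) := rfl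

variable {B' : Type*} [Ring B']

def relZ (h : B' →+* A) : ∀ n : ℕ, Submodule ℤ (Zc A n)
  | 0 => ⊥
  | n + 1 => Submodule.span ℤ
      ({x | ∃ (a : A) (b : B') (z : Zc A n),
          x = (a * h b) ⊗ₜ[ℤ] z - a ⊗ₜ[ℤ] (lactZ A n (h b) z)} ∪
       {x | ∃ (a : A) (z : Zc A n), z ∈ relZ h n ∧ x = a ⊗ₜ[ℤ] z})

lemma relZ_succ (h : B' →+* A) (n : ℕ) : relZ A h (n + 1) = Submodule.span ℤ
      ({x | ∃ (a : A) (b : B') (z : Zc A n),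
          x = (a * h b) ⊗ₜ[ℤ] z - a ⊗ₜ[ℤ] (lactZ A n (h b) z)} ∪
       {x | ∃ (a : A) (z : Zc A n), z ∈ relZ A h n ∧ x = a ⊗ₜ[ℤ] z}) := rfl

lemma commZ : ∀ (n : ℕ) (a a' : A) (z : Zc A n),
    lactZ A n a (ractZ A n a' z) = ractZ A n a' (lactZ A n a z)
  | 0, a, a', z => by exact (mul_assoc a z a').symm
  | n + 1, a, a', z => by
      induction z using TensorProduct.induction_on with
      | zero => erw [map_zero]
      | tmul x y => rw [ractZ_succ, lactZ_succ, lactZ_succ, ractZ_succ]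
      | add u v hu hv => erw [map_add, map_add, hu, hv, map_add, map_add]

lemma lact_rel (h : B' →+* A) :
    ∀ (n : ℕ) (a : A), relZ A h n ≤ (relZ A h n).comap (toZLin (lactZ A n a))
  | 0, a => by simp [relZ]
  | n + 1, a => by
      intro x hx
      show lactZ A (n + 1) a x ∈ relZ A h (n + 1)
      induction hx using Submodule.span_induction with
      | mem y hy =>
        rcases hy with ⟨a', b, z, rfl⟩ | ⟨a', z, hz, rfl⟩
        · refine Submodule.subset_span (Or.inl ⟨a * a', b, z, ?_⟩)
          erw [map_sub]
          show (a * (a' * h b)) ⊗ₜ[ℤ] z - (a * a') ⊗ₜ[ℤ] (lactZ A n (h b) z) = _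
          rw [← mul_assoc]
        · exact Submodule.subset_span (Or.inr ⟨a * a', z, hz, rfl⟩)
      | zero => erw [map_zero]; exact Submodule.zero_mem _
      | add u v _ _ hu hv => erw [map_add]; exact Submodule.add_mem _ hu hv
      | smul c u _ hu => erw [map_zsmul]; exact Submodule.smul_mem _ c hu

lemma ract_rel (h : B' →+* A) :
    ∀ (n : ℕ) (a : A), relZ A h n ≤ (relZ A h n).comap (toZLin (ractZ A n a))
  | 0, a => by simp [relZ]
  | n + 1, a => by
      intro x hx
      show ractZ A (n + 1) a x ∈ relZ A h (n + 1)
      induction hx using Submodule.span_induction with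
      | mem y hy =>
        rcases hy with ⟨a', b, z, rfl⟩ | ⟨a', z, hz, rfl⟩
        · refine Submodule.subset_span (Or.inl ⟨a', b, ractZ A n a z, ?_⟩)
          erw [map_sub]
          show (a' * h b) ⊗ₜ[ℤ] (ractZ A n a z) - a' ⊗ₜ[ℤ] (ractZ A n a (lactZ A n (h b) z)) = _
          rw [← commZ]
        · exact Submodule.subset_span (Or.inr ⟨a', ractZ A n a z, ract_rel h n a hz, rfl⟩)
      | zero => erw [map_zero]; exact Submodule.zero_mem _
      | add u v _ _ hu hv => erw [map_add]; exact Submodule.add_mem _ hu hv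
      | smul c u _ hu => erw [map_zsmul]; exact Submodule.smul_mem _ c hu

def XP (h : B' →+* A) (n : ℕ) : Type _ := Zc A n ⧸ relZ A h n

instance (h : B' →+* A) (n : ℕ) : AddCommGroup (XP A h n) :=
  inferInstanceAs (AddCommGroup (Zc A n ⧸ relZ A h n))

def qlact (h : B' →+* A) (n : ℕ) (a : A) : XP A h n →+ XP A h n :=
  (Submodule.mapQ _ _ (toZLin (lactZ A n a)) (lact_rel A h n a)).toAddMonoidHom

def qract (h : B' →+* A) (n : ℕ) (a : A) : XP A h n →+ XP A h n :=
  (Submodule.mapQ _ _ (toZLin (ractZ A n a)) (ract_rel A h n a)).toAddMonoidHom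

end TensorPowers

section Aux

variable (A : Type*) [Ring A] {B' : Type*} [Ring B']

lemma lactZ_add : ∀ (m : ℕ) (a a' : A) (z : Zc A m),
    lactZ A m (a + a') z = lactZ A m a z + lactZ A m a' z
  | 0, a, a', z => add_mul a a' z
  | m + 1, a, a', z => by
      induction z using TensorProduct.induction_on with
      | zero => erw [map_zero, add_zero]
      | tmul x y => rw [lactZ_succ, lactZ_succ, lactZ_succ, add_mul, TensorProduct.add_tmul]; rfl
      | add u v hu hv => erw [map_add, map_add, map_add, hu, hv]; abel

lemma lactZ_mul : ∀ (m : ℕ) (a a' : A) (z : Zc A m),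
    lactZ A m (a * a') z = lactZ A m a (lactZ A m a' z)
  | 0, a, a', z => mul_assoc a a' z
  | m + 1, a, a', z => by
      induction z using TensorProduct.induction_on with
      | zero => erw [map_zero]
      | tmul x y => rw [lactZ_succ, lactZ_succ, lactZ_succ, mul_assoc]
      | add u v hu hv => erw [map_add, map_add, map_add, hu, hv]

lemma lactZ_one : ∀ (m : ℕ) (z : Zc A m), lactZ A m 1 z = z
  | 0, z => @one_mul A _ z
  | m + 1, z => by
      induction z using TensorProduct.induction_on with
      | zero => erw [map_zero]; rfl
      | tmul x y => rw [lactZ_succ, one_mul]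
      | add u v hu hv => erw [map_add, hu, hv]; rfl

lemma lactZ_zeroA : ∀ (m : ℕ) (z : Zc A m), lactZ A m 0 z = 0
  | 0, z => @zero_mul A _ z
  | m + 1, z => by
      induction z using TensorProduct.induction_on with
      | zero => erw [map_zero]
      | tmul x y => rw [lactZ_succ, zero_mul, TensorProduct.zero_tmul]; rfl
      | add u v hu hv => erw [map_add, hu, hv, add_zero]

variable {A}

lemma mem_relZ_succ_left (h : B' →+* A) (m : ℕ) (a : A) (b : B') (z : Zc A m) :
    (a * h b) ⊗ₜ[ℤ] z - a ⊗ₜ[ℤ] (lactZ A m (h b) z) ∈ relZ A h (m + 1) :=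
  Submodule.subset_span (Or.inl ⟨a, b, z, rfl⟩)

lemma mem_relZ_succ_right (h : B' →+* A) (m : ℕ) (a : A) {z : Zc A m}
    (hz : z ∈ relZ A h m) : a ⊗ₜ[ℤ] z ∈ relZ A h (m + 1) :=
  Submodule.subset_span (Or.inr ⟨a, z, hz, rfl⟩)

/-- The class of `z` in `XP A h m`. -/
def mkX (h : B' →+* A) (m : ℕ) (z : Zc A m) : XP A h m := Submodule.Quotient.mk z

lemma mkX_add (h : B' →+* A) (m : ℕ) (z z' : Zc A m) :
    mkX h m (z + z') = mkX h m z + mkX h m z' := rfl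

lemma mkX_eq_zero (h : B' →+* A) (m : ℕ) {z : Zc A m} (hz : z ∈ relZ A h m) :
    mkX h m z = 0 := (Submodule.Quotient.mk_eq_zero _).2 hz

lemma mkX_surjective (h : B' →+* A) (m : ℕ) : Function.Surjective (mkX h m) :=
  Submodule.Quotient.mk_surjective _

@[simp] lemma qlact_mkX (h : B' →+* A) (m : ℕ) (a : A) (z : Zc A m) :
    qlact A h m a (mkX h m z) = mkX h m (lactZ A m a z) := rfl

@[simp] lemma qract_mkX (h : B' →+* A) (m : ℕ) (a : A) (z : Zc A m) :
    qract A h m a (mkX h m z) = mkX h m (ractZ A m a z) := rfl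

lemma qlact_mul (h : B' →+* A) (m : ℕ) (a a' : A) (x : XP A h m) :
    qlact A h m (a * a') x = qlact A h m a (qlact A h m a' x) := by
  obtain ⟨z, rfl⟩ := mkX_surjective h m x
  rw [qlact_mkX, qlact_mkX, qlact_mkX, lactZ_mul]

lemma qlact_one (h : B' →+* A) (m : ℕ) (x : XP A h m) : qlact A h m 1 x = x := by
  obtain ⟨z, rfl⟩ := mkX_surjective h m x
  rw [qlact_mkX, lactZ_one]

lemma qlact_zeroA (h : B' →+* A) (m : ℕ) (x : XP A h m) : qlact A h m 0 x = 0 := by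
  obtain ⟨z, rfl⟩ := mkX_surjective h m x
  rw [qlact_mkX, lactZ_zeroA]; rfl

lemma qlact_addA (h : B' →+* A) (m : ℕ) (a a' : A) (x : XP A h m) :
    qlact A h m (a + a') x = qlact A h m a x + qlact A h m a' x := by
  obtain ⟨z, rfl⟩ := mkX_surjective h m x
  rw [qlact_mkX, qlact_mkX, qlact_mkX, lactZ_add]; rfl

lemma qlact_qract (h : B' →+* A) (m : ℕ) (a a' : A) (x : XP A h m) :
    qlact A h m a (qract A h m a' x) = qract A h m a' (qlact A h m a x) := by
  obtain ⟨z, rfl⟩ := mkX_surjective h m x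
  rw [qract_mkX, qlact_mkX, qlact_mkX, qract_mkX, commZ]

/-- Left insertion `z ↦ a ⊗ z`, `XP A h m →+ XP A h (m+1)`. -/
def insXP (h : B' →+* A) (m : ℕ) (a : A) : XP A h m →+ XP A h (m + 1) :=
  (Submodule.mapQ (relZ A h m) (relZ A h (m + 1))
    (TensorProduct.mk ℤ A (Zc A m) a)
    (fun z hz => mem_relZ_succ_right h m a hz)).toAddMonoidHom

@[simp] lemma insXP_mkX (h : B' →+* A) (m : ℕ) (a : A) (z : Zc A m) :
    insXP h m a (mkX h m z) = mkX h (m + 1) (a ⊗ₜ[ℤ] z) := rfl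

lemma insXP_addA (h : B' →+* A) (m : ℕ) (a a' : A) (x : XP A h m) :
    insXP h m (a + a') x = insXP h m a x + insXP h m a' x := by
  obtain ⟨z, rfl⟩ := mkX_surjective h m x
  rw [insXP_mkX, insXP_mkX, insXP_mkX, TensorProduct.add_tmul]; erw [mkX_add]

lemma insXP_zeroA (h : B' →+* A) (m : ℕ) (x : XP A h m) : insXP h m 0 x = 0 := by
  obtain ⟨z, rfl⟩ := mkX_surjective h m x
  rw [insXP_mkX, TensorProduct.zero_tmul]; rfl

lemma insXP_hmul (h : B' →+* A) (m : ℕ) (a : A) (b : B') (x : XP A h m) :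
    insXP h m (a * h b) x = insXP h m a (qlact A h m (h b) x) := by
  obtain ⟨z, rfl⟩ := mkX_surjective h m x
  rw [insXP_mkX, qlact_mkX, insXP_mkX]
  exact (Submodule.Quotient.eq _).2 (mem_relZ_succ_left h m a b z)

lemma qlact_insXP (h : B' →+* A) (m : ℕ) (a a' : A) (x : XP A h m) :
    qlact A h (m + 1) a' (insXP h m a x) = insXP h m (a' * a) x := by
  obtain ⟨z, rfl⟩ := mkX_surjective h m x
  rw [insXP_mkX]; erw [qlact_mkX]

lemma qract_insXP (h : B' →+* A) (m : ℕ) (a a' : A) (x : XP A h m) :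
    qract A h (m + 1) a' (insXP h m a x) = insXP h m a (qract A h m a' x) := by
  obtain ⟨z, rfl⟩ := mkX_surjective h m x
  rw [insXP_mkX]; erw [qract_mkX]

/-- Lift a biadditive map `A → Zc A m → P` killing the relations to `XP A h (m+1)`. -/
def liftXP (h : B' →+* A) (m : ℕ) {P : Type*} [AddCommGroup P] (φ : A →+ Zc A m →+ P)
    (h1 : ∀ (a : A) (b : B') (z : Zc A m), φ (a * h b) z = φ a (lactZ A m (h b) z))
    (h2 : ∀ (a : A) (z : Zc A m), z ∈ relZ A h m → φ a z = 0) : XP A h (m + 1) →+ P :=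
  (Submodule.liftQ (relZ A h (m + 1))
    (TensorProduct.liftAddHom φ (by
      intro r a z
      simp only [AddMonoidHom.map_zsmul, AddMonoidHom.smul_apply]
      exact ((congrArg (φ a) (int_smul_eq_zsmul (ZM A m).isModule r z)).trans
        (map_zsmul (φ a) r z)).symm)).toIntLinearMap
    (by
      rw [relZ_succ]; erw [Submodule.span_le]
      rintro x (⟨a, b, z, rfl⟩ | ⟨a, z, hz, rfl⟩)
      · show TensorProduct.liftAddHom φ (by
          intro r a z
          simp only [AddMonoidHom.map_zsmul, AddMonoidHom.smul_apply]
          exact ((congrArg (φ a) (int_smul_eq_zsmul (ZM A m).isModule r z)).trans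
            (map_zsmul (φ a) r z)).symm) ((a * h b) ⊗ₜ[ℤ] z - a ⊗ₜ[ℤ] (lactZ A m (h b) z)) = 0
        rw [map_sub, TensorProduct.liftAddHom_tmul, TensorProduct.liftAddHom_tmul, h1, sub_self]
      · show TensorProduct.liftAddHom φ (by
          intro r a z
          simp only [AddMonoidHom.map_zsmul, AddMonoidHom.smul_apply]
          exact ((congrArg (φ a) (int_smul_eq_zsmul (ZM A m).isModule r z)).trans
            (map_zsmul (φ a) r z)).symm) (a ⊗ₜ[ℤ] z) = 0
        rw [TensorProduct.liftAddHom_tmul]; exact h2 a z hz)).toAddMonoidHom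

@[simp] lemma liftXP_mkX (h : B' →+* A) (m : ℕ) {P : Type*} [AddCommGroup P]
    (φ : A →+ Zc A m →+ P) (h1 h2) (a : A) (z : Zc A m) :
    liftXP h m φ h1 h2 (mkX h (m + 1) (a ⊗ₜ[ℤ] z)) = φ a z := rfl

/-- Induction principle for `XP A h (m+1)`. -/
lemma xp_induction (h : B' →+* A) (m : ℕ) {p : XP A h (m + 1) → Prop} (zero : p 0)
    (tm : ∀ (a : A) (z : Zc A m), p (mkX h (m + 1) (a ⊗ₜ[ℤ] z)))
    (add : ∀ x y, p x → p y → p (x + y)) : ∀ x, p x := by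
  intro x
  obtain ⟨y, rfl⟩ := mkX_surjective h (m + 1) x
  induction y using TensorProduct.induction_on with
  | zero => exact zero
  | tmul a z => exact tm a z
  | add u v hu hv => erw [mkX_add]; exact add _ _ hu hv

lemma single_comm {M N : Type*} [AddCommGroup M] [AddCommGroup N] (f : M →+ N) {q : ℕ}
    (l : Fin q) (x : M) :
    (fun l' => f ((Pi.single l x : Fin q → M) l')) = Pi.single l (f x) := by
  funext l'
  simp [Pi.single_apply, apply_ite f]

end Aux


section StepSep

variable {C B A : Type*} [Ring C] [Ring B] [Ring A] (ι : C →+* B) (j : B →+* A)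

lemma lact_tmul_one_one (c : C) :
    lact ι (j.comp ι) (ι c) (tmul ι (j.comp ι) 1 1) =
      ract ι (j.comp ι) (j (ι c)) (tmul ι (j.comp ι) 1 1) := by
  rw [lact_tmul, ract_tmul, mul_one]
  have h := tmul_rel ι (j.comp ι) 1 c 1
  rw [one_mul] at h
  rw [h, mul_one, one_mul]
  rfl

variable {m q : ℕ} (i₀ : XP A j m →+ (Fin q → XP A (j.comp ι) m))
variable (p₀ : (Fin q → XP A (j.comp ι) m) →+ XP A j m)

/-- The auxiliary map `t ↦ (Σ b ⊗ a') ↦ Σ (a·jb) ⊗ i₀(a'·y)_l` in the separable step. -/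
def Lam (hi₀l : ∀ (a : A) x, i₀ (qlact A j m a x) = fun k => qlact A (j.comp ι) m a (i₀ x k))
    (l : Fin q) (a : A) (y : XP A j m) :
    Tens ι (j.comp ι) →+ XP A (j.comp ι) (m + 1) :=
  NCT.lift ι (j.comp ι)
    (mkBilin (fun b a' => insXP (j.comp ι) m (a * j b) (i₀ (qlact A j m a' y) l))
      (fun b b' a' => by rw [map_add, mul_add, insXP_addA])
      (fun b a' a'' => by
        rw [qlact_addA, map_add, Pi.add_apply, map_add]))
    (fun b c a' => by
      simp only [mkBilin_apply]
      rw [map_mul, ← mul_assoc]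
      rw [show j (ι c) = (j.comp ι) c from rfl, insXP_hmul]
      congr 1
      rw [qlact_mul]
      exact (congrFun (hi₀l ((j.comp ι) c) (qlact A j m a' y)) l).symm)

variable (hi₀l : ∀ (a : A) x, i₀ (qlact A j m a x) = fun k => qlact A (j.comp ι) m a (i₀ x k))

@[simp] lemma Lam_tmul (l : Fin q) (a : A) (y : XP A j m) (b : B) (a' : A) :
    Lam ι j i₀ hi₀l l a y (tmul ι (j.comp ι) b a') =
      insXP (j.comp ι) m (a * j b) (i₀ (qlact A j m a' y) l) := rfl

lemma Lam_lact (l : Fin q) (a : A) (y : XP A j m) (b : B) (t : Tens ι (j.comp ι)) :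
    Lam ι j i₀ hi₀l l a y (lact ι (j.comp ι) b t) = Lam ι j i₀ hi₀l l (a * j b) y t := by
  induction t using tens_induction with
  | zero => rw [map_zero, map_zero, map_zero]
  | tm b' a' => rw [lact_tmul, Lam_tmul, Lam_tmul, map_mul, mul_assoc]
  | add x y hx hy => rw [map_add, map_add, map_add, hx, hy]

lemma Lam_ract (l : Fin q) (a : A) (y : XP A j m) (a'' : A) (t : Tens ι (j.comp ι)) :
    Lam ι j i₀ hi₀l l a y (ract ι (j.comp ι) a'' t) =
      Lam ι j i₀ hi₀l l a (qlact A j m a'' y) t := by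
  induction t using tens_induction with
  | zero => rw [map_zero, map_zero, map_zero]
  | tm b' a' => rw [ract_tmul, Lam_tmul, Lam_tmul, qlact_mul]
  | add x y hx hy => rw [map_add, map_add, map_add, hx, hy]

lemma Lam_addA (l : Fin q) (a a'' : A) (y : XP A j m) (t : Tens ι (j.comp ι)) :
    Lam ι j i₀ hi₀l l (a + a'') y t =
      Lam ι j i₀ hi₀l l a y t + Lam ι j i₀ hi₀l l a'' y t := by
  induction t using tens_induction with
  | zero => rw [map_zero, map_zero, map_zero, add_zero]
  | tm b' a' => rw [Lam_tmul, Lam_tmul, Lam_tmul, add_mul, insXP_addA]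
  | add x y hx hy => rw [map_add, map_add, map_add, hx, hy]; abel

lemma Lam_addY (l : Fin q) (a : A) (y y' : XP A j m) (t : Tens ι (j.comp ι)) :
    Lam ι j i₀ hi₀l l a (y + y') t =
      Lam ι j i₀ hi₀l l a y t + Lam ι j i₀ hi₀l l a y' t := by
  induction t using tens_induction with
  | zero => rw [map_zero, map_zero, map_zero, add_zero]
  | tm b' a' => rw [Lam_tmul, Lam_tmul, Lam_tmul, map_add, map_add, Pi.add_apply, map_add]
  | add x y hx hy => rw [map_add, map_add, map_add, hx, hy]; abel

lemma Lam_zeroY (l : Fin q) (a : A) (t : Tens ι (j.comp ι)) :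
    Lam ι j i₀ hi₀l l a 0 t = 0 := by
  induction t using tens_induction with
  | zero => rw [map_zero]
  | tm b' a' => rw [Lam_tmul, map_zero, map_zero, Pi.zero_apply, map_zero]
  | add x y hx hy => rw [map_add, hx, hy, add_zero]

lemma Lam_qlact (l : Fin q) (a a'' : A) (y : XP A j m) (t : Tens ι (j.comp ι)) :
    qlact A (j.comp ι) (m + 1) a'' (Lam ι j i₀ hi₀l l a y t) =
      Lam ι j i₀ hi₀l l (a'' * a) y t := by
  induction t using tens_induction with
  | zero => rw [map_zero, map_zero, map_zero]
  | tm b' a' => rw [Lam_tmul, Lam_tmul, qlact_insXP, mul_assoc]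
  | add x y hx hy => rw [map_add, map_add, map_add, hx, hy]

lemma Lam_qract
    (hi₀r : ∀ (a : A) x, i₀ (qract A j m a x) = fun k => qract A (j.comp ι) m a (i₀ x k))
    (l : Fin q) (a a'' : A) (y : XP A j m) (t : Tens ι (j.comp ι)) :
    qract A (j.comp ι) (m + 1) a'' (Lam ι j i₀ hi₀l l a y t) =
      Lam ι j i₀ hi₀l l a (qract A j m a'' y) t := by
  induction t using tens_induction with
  | zero => rw [map_zero, map_zero, map_zero]
  | tm b' a' =>
      rw [Lam_tmul, Lam_tmul, qract_insXP]
      congr 1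
      rw [qlact_qract, ← congrFun (hi₀r a'' (qlact A j m a' y)) l]
  | add x y hx hy => rw [map_add, map_add, map_add, hx, hy]

/-- The forward map in the separable step. -/
def PhiSep (t₀ : Tens ι (j.comp ι))
    (ht₀ : ∀ b, lact ι (j.comp ι) b t₀ = ract ι (j.comp ι) (j b) t₀) (l : Fin q) :
    XP A j (m + 1) →+ XP A (j.comp ι) (m + 1) :=
  liftXP j m
    (mkBilin (fun a z => Lam ι j i₀ hi₀l l a (mkX j m z) t₀)
      (fun a a' z => by rw [Lam_addA])
      (fun a z z' => by rw [mkX_add, Lam_addY]))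
    (fun a b z => by
      simp only [mkBilin_apply]
      rw [← Lam_lact, ht₀, Lam_ract, qlact_mkX])
    (fun a z hz => by
      simp only [mkBilin_apply]
      rw [mkX_eq_zero j m hz, Lam_zeroY])

variable (t₀ : Tens ι (j.comp ι))
    (ht₀ : ∀ b, lact ι (j.comp ι) b t₀ = ract ι (j.comp ι) (j b) t₀)

@[simp] lemma PhiSep_mkX (l : Fin q) (a : A) (z : Zc A m) :
    PhiSep ι j i₀ hi₀l t₀ ht₀ l (mkX j (m + 1) (a ⊗ₜ[ℤ] z)) =
      Lam ι j i₀ hi₀l l a (mkX j m z) t₀ := rfl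

lemma PhiSep_qlact (l : Fin q) (a : A) (x : XP A j (m + 1)) :
    PhiSep ι j i₀ hi₀l t₀ ht₀ l (qlact A j (m + 1) a x) =
      qlact A (j.comp ι) (m + 1) a (PhiSep ι j i₀ hi₀l t₀ ht₀ l x) := by
  induction x using xp_induction with
  | zero => simp only [map_zero]
  | tm a' z => erw [qlact_mkX]; rw [lactZ_succ, PhiSep_mkX, PhiSep_mkX, Lam_qlact]
  | add x y hx hy => rw [map_add, map_add, map_add, map_add, hx, hy]

lemma PhiSep_qract
    (hi₀r : ∀ (a : A) x, i₀ (qract A j m a x) = fun k => qract A (j.comp ι) m a (i₀ x k))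
    (l : Fin q) (a : A) (x : XP A j (m + 1)) :
    PhiSep ι j i₀ hi₀l t₀ ht₀ l (qract A j (m + 1) a x) =
      qract A (j.comp ι) (m + 1) a (PhiSep ι j i₀ hi₀l t₀ ht₀ l x) := by
  induction x using xp_induction with
  | zero => simp only [map_zero]
  | tm a' z =>
      erw [qract_mkX]; rw [ractZ_succ, PhiSep_mkX, PhiSep_mkX, Lam_qract ι j i₀ hi₀l hi₀r,
        qract_mkX]
  | add x y hx hy => rw [map_add, map_add, map_add, map_add, hx, hy]

/-- The backward map in the separable step. -/
def PsiSep
    (hp₀l : ∀ (a : A) v, p₀ (fun k => qlact A (j.comp ι) m a (v k)) = qlact A j m a (p₀ v))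
    (f₀ : A) (hf₀ : ∀ c : C, (j.comp ι) c * f₀ = f₀ * (j.comp ι) c) (l : Fin q) :
    XP A (j.comp ι) (m + 1) →+ XP A j (m + 1) :=
  liftXP (j.comp ι) m
    (mkBilin (fun a z =>
        insXP j m a (qlact A j m f₀ (p₀ (Pi.single l (mkX (j.comp ι) m z)))))
      (fun a a' z => by rw [insXP_addA])
      (fun a z z' => by
        rw [mkX_add, Pi.single_add, map_add, map_add, map_add]))
    (fun a c z => by
      simp only [mkBilin_apply]
      rw [show a * (j.comp ι) c = a * j (ι c) from rfl, insXP_hmul, ← qlact_mul,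
        show j (ι c) * f₀ = f₀ * (j.comp ι) c from hf₀ c, qlact_mul, ← hp₀l,
        single_comm (qlact A (j.comp ι) m ((j.comp ι) c)) l, qlact_mkX])
    (fun a z hz => by
      simp only [mkBilin_apply]
      rw [mkX_eq_zero (j.comp ι) m hz, Pi.single_zero, map_zero, map_zero, map_zero])

variable (hp₀l : ∀ (a : A) v, p₀ (fun k => qlact A (j.comp ι) m a (v k)) = qlact A j m a (p₀ v))
variable (f₀ : A) (hf₀ : ∀ c : C, (j.comp ι) c * f₀ = f₀ * (j.comp ι) c)

@[simp] lemma PsiSep_mkX (l : Fin q) (a : A) (z : Zc A m) :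
    PsiSep ι j p₀ hp₀l f₀ hf₀ l (mkX (j.comp ι) (m + 1) (a ⊗ₜ[ℤ] z)) =
      insXP j m a (qlact A j m f₀ (p₀ (Pi.single l (mkX (j.comp ι) m z)))) := rfl

lemma PsiSep_ins (l : Fin q) (a : A) (w : XP A (j.comp ι) m) :
    PsiSep ι j p₀ hp₀l f₀ hf₀ l (insXP (j.comp ι) m a w) =
      insXP j m a (qlact A j m f₀ (p₀ (Pi.single l w))) := by
  obtain ⟨z, rfl⟩ := mkX_surjective (j.comp ι) m w
  rw [insXP_mkX, PsiSep_mkX]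

lemma PsiSep_qlact (l : Fin q) (a : A) (x : XP A (j.comp ι) (m + 1)) :
    PsiSep ι j p₀ hp₀l f₀ hf₀ l (qlact A (j.comp ι) (m + 1) a x) =
      qlact A j (m + 1) a (PsiSep ι j p₀ hp₀l f₀ hf₀ l x) := by
  induction x using xp_induction with
  | zero => simp only [map_zero]
  | tm a' z => erw [qlact_mkX]; rw [lactZ_succ, PsiSep_mkX, PsiSep_mkX, qlact_insXP]
  | add x y hx hy => rw [map_add, map_add, map_add, map_add, hx, hy]

lemma PsiSep_qract
    (hp₀r : ∀ (a : A) v, p₀ (fun k => qract A (j.comp ι) m a (v k)) = qract A j m a (p₀ v))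
    (l : Fin q) (a : A) (x : XP A (j.comp ι) (m + 1)) :
    PsiSep ι j p₀ hp₀l f₀ hf₀ l (qract A (j.comp ι) (m + 1) a x) =
      qract A j (m + 1) a (PsiSep ι j p₀ hp₀l f₀ hf₀ l x) := by
  induction x using xp_induction with
  | zero => simp only [map_zero]
  | tm a' z =>
      erw [qract_mkX]; rw [ractZ_succ, PsiSep_mkX, PsiSep_mkX, qract_insXP]
      congr 1
      rw [← qract_mkX, ← single_comm (qract A (j.comp ι) m a), hp₀r, qlact_qract]
  | add x y hx hy => rw [map_add, map_add, map_add, map_add, hx, hy]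

lemma sum_PsiSep_Lam
    (hpi₀ : ∀ x, p₀ (i₀ x) = x)
    (ps : Tens ι (j.comp ι) →+ A)
    (hps : ∀ (b : B) (a' : A), ps (tmul ι (j.comp ι) b a') = j b * f₀ * a')
    (a : A) (y : XP A j m) (t : Tens ι (j.comp ι)) :
    ∑ l : Fin q, PsiSep ι j p₀ hp₀l f₀ hf₀ l (Lam ι j i₀ hi₀l l a y t) =
      insXP j m a (qlact A j m (ps t) y) := by
  induction t using tens_induction with
  | zero =>
      simp only [map_zero, Finset.sum_const_zero]
      rw [qlact_zeroA, map_zero]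
  | tm b a' =>
      have step : ∀ l : Fin q,
          PsiSep ι j p₀ hp₀l f₀ hf₀ l (Lam ι j i₀ hi₀l l a y (tmul ι (j.comp ι) b a')) =
            insXP j m (a * j b)
              (qlact A j m f₀ (p₀ (Pi.single l (i₀ (qlact A j m a' y) l)))) := by
        intro l
        rw [Lam_tmul, PsiSep_ins]
      rw [Finset.sum_congr rfl (fun l _ => step l)]
      rw [← map_sum (insXP j m (a * j b)), ← map_sum (qlact A j m f₀), ← map_sum p₀,
        Finset.univ_sum_single, hpi₀, ← qlact_mul, insXP_hmul, ← qlact_mul, hps,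
        mul_assoc]
  | add x y' hx hy' =>
      simp only [map_add]
      rw [Finset.sum_add_distrib, hx, hy', qlact_addA, map_add]

/-- The separable induction step. -/
lemma stepSep
    (is : A →+ Tens ι (j.comp ι)) (ps : Tens ι (j.comp ι) →+ A)
    (his1 : ∀ (b : B) (a : A), is (j b * a) = lact ι (j.comp ι) b (is a))
    (his2 : ∀ (a a' : A), is (a * a') = ract ι (j.comp ι) a' (is a))
    (hps1 : ∀ (b : B) x, ps (lact ι (j.comp ι) b x) = j b * ps x)
    (hps2 : ∀ (a : A) x, ps (ract ι (j.comp ι) a x) = ps x * a)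
    (hpis : ∀ a, ps (is a) = a)
    (hi₀l' : ∀ (a : A) x, i₀ (qlact A j m a x) = fun k => qlact A (j.comp ι) m a (i₀ x k))
    (hp₀l' : ∀ (a : A) v, p₀ (fun k => qlact A (j.comp ι) m a (v k)) = qlact A j m a (p₀ v))
    (hi₀r : ∀ (a : A) x, i₀ (qract A j m a x) = fun k => qract A (j.comp ι) m a (i₀ x k))
    (hp₀r : ∀ (a : A) v, p₀ (fun k => qract A (j.comp ι) m a (v k)) = qract A j m a (p₀ v))
    (hpi₀ : ∀ x, p₀ (i₀ x) = x) :
    ∃ (i : XP A j (m + 1) →+ (Fin q → XP A (j.comp ι) (m + 1)))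
      (p : (Fin q → XP A (j.comp ι) (m + 1)) →+ XP A j (m + 1)),
      (∀ (a : A) x, i (qlact A j (m + 1) a x) =
        fun k => qlact A (j.comp ι) (m + 1) a (i x k)) ∧
      (∀ (a : A) x, i (qract A j (m + 1) a x) =
        fun k => qract A (j.comp ι) (m + 1) a (i x k)) ∧
      (∀ (a : A) v, p (fun k => qlact A (j.comp ι) (m + 1) a (v k)) =
        qlact A j (m + 1) a (p v)) ∧
      (∀ (a : A) v, p (fun k => qract A (j.comp ι) (m + 1) a (v k)) =
        qract A j (m + 1) a (p v)) ∧
      ∀ x, p (i x) = x := by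
  set e : Tens ι (j.comp ι) := tmul ι (j.comp ι) 1 1 with he
  set t₀ : Tens ι (j.comp ι) := is 1 with ht₀def
  have ht₀ : ∀ b, lact ι (j.comp ι) b t₀ = ract ι (j.comp ι) (j b) t₀ := by
    intro b
    rw [ht₀def, ← his1, ← his2, mul_one, one_mul]
  have hf₀ : ∀ c : C, (j.comp ι) c * ps e = ps e * (j.comp ι) c := by
    intro c
    calc (j.comp ι) c * ps e = j (ι c) * ps e := rfl
    _ = ps (lact ι (j.comp ι) (ι c) e) := (hps1 _ _).symm
    _ = ps (ract ι (j.comp ι) (j (ι c)) e) := by rw [lact_tmul_one_one]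
    _ = ps e * j (ι c) := hps2 _ _
  have hps' : ∀ (b : B) (a' : A), ps (tmul ι (j.comp ι) b a') = j b * ps e * a' := by
    intro b a'
    have h1 : tmul ι (j.comp ι) b a' = ract ι (j.comp ι) a' (tmul ι (j.comp ι) b 1) := by
      rw [ract_tmul, one_mul]
    have h2 : tmul ι (j.comp ι) b 1 = lact ι (j.comp ι) b e := by
      rw [he, lact_tmul, mul_one]
    rw [h1, hps2, h2, hps1]
  refine ⟨AddMonoidHom.mk' (fun x l => PhiSep ι j i₀ hi₀l' t₀ ht₀ l x)
      (fun x y => funext fun l => map_add _ x y),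
    AddMonoidHom.mk' (fun v => ∑ l : Fin q, PsiSep ι j p₀ hp₀l' (ps e) hf₀ l (v l))
      (fun v w => by
        simp only [Pi.add_apply, map_add]
        exact Finset.sum_add_distrib), ?_, ?_, ?_, ?_, ?_⟩
  · intro a x
    funext l
    exact PhiSep_qlact ι j i₀ hi₀l' t₀ ht₀ l a x
  · intro a x
    funext l
    exact PhiSep_qract ι j i₀ hi₀l' t₀ ht₀ hi₀r l a x
  · intro a v
    simp only [AddMonoidHom.mk'_apply]
    rw [Finset.sum_congr rfl fun l _ => PsiSep_qlact ι j p₀ hp₀l' (ps e) hf₀ l a (v l)]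
    exact (map_sum (qlact A j (m + 1) a) _ Finset.univ).symm
  · intro a v
    simp only [AddMonoidHom.mk'_apply]
    rw [Finset.sum_congr rfl fun l _ => PsiSep_qract ι j p₀ hp₀l' (ps e) hf₀ hp₀r l a (v l)]
    exact (map_sum (qract A j (m + 1) a) _ Finset.univ).symm
  · intro x
    induction x using xp_induction with
    | zero => simp only [map_zero, Finset.sum_const_zero]
    | tm a z =>
        simp only [AddMonoidHom.mk'_apply, PhiSep_mkX]
        rw [sum_PsiSep_Lam ι j i₀ p₀ hi₀l' hp₀l' (ps e) hf₀ hpi₀ ps hps', ht₀def, hpis,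
          qlact_one, insXP_mkX]
    | add x y hx hy => rw [map_add, map_add, hx, hy]


end StepSep


section StepHSep

variable {C B A : Type*} [Ring C] [Ring B] [Ring A] (ι : C →+* B) (j : B →+* A)
variable {m n r : ℕ}
variable (I : Tens ι (j.comp ι) →+ (Fin n → A)) (P : (Fin n → A) →+ Tens ι (j.comp ι))
variable (i₀ : XP A (j.comp ι) m →+ (Fin r → XP A j m))
variable (p₀ : (Fin r → XP A j m) →+ XP A (j.comp ι) m)

/-- The Θ map in the H-separable step. -/
def Theta (a : A) (y : XP A (j.comp ι) m) :
    Tens ι (j.comp ι) →+ XP A (j.comp ι) (m + 1) :=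
  NCT.lift ι (j.comp ι)
    (mkBilin (fun b a' => insXP (j.comp ι) m (a * j b) (qlact A (j.comp ι) m a' y))
      (fun b b' a' => by rw [map_add, mul_add, insXP_addA])
      (fun b a' a'' => by rw [qlact_addA, map_add]))
    (fun b c a' => by
      simp only [mkBilin_apply]
      rw [map_mul, ← mul_assoc, show j (ι c) = (j.comp ι) c from rfl, insXP_hmul,
        ← qlact_mul])

@[simp] lemma Theta_tmul (a : A) (y : XP A (j.comp ι) m) (b : B) (a' : A) :
    Theta ι j a y (tmul ι (j.comp ι) b a') =
      insXP (j.comp ι) m (a * j b) (qlact A (j.comp ι) m a' y) := rfl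

lemma Theta_lact (a : A) (y : XP A (j.comp ι) m) (b : B) (t : Tens ι (j.comp ι)) :
    Theta ι j a y (lact ι (j.comp ι) b t) = Theta ι j (a * j b) y t := by
  induction t using tens_induction with
  | zero => rw [map_zero, map_zero, map_zero]
  | tm b' a' => rw [lact_tmul, Theta_tmul, Theta_tmul, map_mul, mul_assoc]
  | add x y hx hy => rw [map_add, map_add, map_add, hx, hy]

lemma Theta_ract (a : A) (y : XP A (j.comp ι) m) (a'' : A) (t : Tens ι (j.comp ι)) :
    Theta ι j a y (ract ι (j.comp ι) a'' t) =
      Theta ι j a (qlact A (j.comp ι) m a'' y) t := by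
  induction t using tens_induction with
  | zero => rw [map_zero, map_zero, map_zero]
  | tm b' a' => rw [ract_tmul, Theta_tmul, Theta_tmul, qlact_mul]
  | add x y hx hy => rw [map_add, map_add, map_add, hx, hy]

lemma Theta_addA (a a'' : A) (y : XP A (j.comp ι) m) (t : Tens ι (j.comp ι)) :
    Theta ι j (a + a'') y t = Theta ι j a y t + Theta ι j a'' y t := by
  induction t using tens_induction with
  | zero => rw [map_zero, map_zero, map_zero, add_zero]
  | tm b' a' => rw [Theta_tmul, Theta_tmul, Theta_tmul, add_mul, insXP_addA]
  | add x y hx hy => rw [map_add, map_add, map_add, hx, hy]; abel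

lemma Theta_addY (a : A) (y y' : XP A (j.comp ι) m) (t : Tens ι (j.comp ι)) :
    Theta ι j a (y + y') t = Theta ι j a y t + Theta ι j a y' t := by
  induction t using tens_induction with
  | zero => rw [map_zero, map_zero, map_zero, add_zero]
  | tm b' a' => rw [Theta_tmul, Theta_tmul, Theta_tmul, map_add, map_add]
  | add x y hx hy => rw [map_add, map_add, map_add, hx, hy]; abel

lemma Theta_zeroY (a : A) (t : Tens ι (j.comp ι)) : Theta ι j a (0 : XP A (j.comp ι) m) t = 0 := by
  induction t using tens_induction with
  | zero => rw [map_zero]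
  | tm b' a' => rw [Theta_tmul, map_zero, map_zero]
  | add x y hx hy => rw [map_add, hx, hy, add_zero]

lemma Theta_sum (a : A) (t : Tens ι (j.comp ι)) {κ : Type*} (s : Finset κ)
    (g : κ → XP A (j.comp ι) m) :
    ∑ l ∈ s, Theta ι j a (g l) t = Theta ι j a (∑ l ∈ s, g l) t := by
  induction s using Finset.cons_induction with
  | empty => simp only [Finset.sum_empty]; rw [Theta_zeroY]
  | cons l s hl ih => rw [Finset.sum_cons, Finset.sum_cons, Theta_addY, ih]

lemma Theta_qlact (a a'' : A) (y : XP A (j.comp ι) m) (t : Tens ι (j.comp ι)) :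
    qlact A (j.comp ι) (m + 1) a'' (Theta ι j a y t) = Theta ι j (a'' * a) y t := by
  induction t using tens_induction with
  | zero => rw [map_zero, map_zero, map_zero]
  | tm b' a' => rw [Theta_tmul, Theta_tmul, qlact_insXP, mul_assoc]
  | add x y hx hy => rw [map_add, map_add, map_add, hx, hy]

lemma Theta_qract (a a'' : A) (y : XP A (j.comp ι) m) (t : Tens ι (j.comp ι)) :
    qract A (j.comp ι) (m + 1) a'' (Theta ι j a y t) =
      Theta ι j a (qract A (j.comp ι) m a'' y) t := by
  induction t using tens_induction with
  | zero => rw [map_zero, map_zero, map_zero]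
  | tm b' a' => rw [Theta_tmul, Theta_tmul, qract_insXP, qlact_qract]
  | add x y hx hy => rw [map_add, map_add, map_add, hx, hy]

/-- The forward map in the H-separable step. -/
def PhiH (hi₀l : ∀ (a : A) x,
      i₀ (qlact A (j.comp ι) m a x) = fun k => qlact A j m a (i₀ x k))
    (ek : A) (hek : ∀ c : C, (j.comp ι) c * ek = ek * (j.comp ι) c) (l : Fin r) :
    XP A (j.comp ι) (m + 1) →+ XP A j (m + 1) :=
  liftXP (j.comp ι) m
    (mkBilin (fun a z =>
        insXP j m a (i₀ (qlact A (j.comp ι) m ek (mkX (j.comp ι) m z)) l))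
      (fun a a' z => by rw [insXP_addA])
      (fun a z z' => by
        rw [mkX_add, map_add, map_add, Pi.add_apply, map_add]))
    (fun a c z => by
      simp only [mkBilin_apply]
      rw [show a * (j.comp ι) c = a * j (ι c) from rfl, insXP_hmul,
        show qlact A j m (j (ι c))
            (i₀ (qlact A (j.comp ι) m ek (mkX (j.comp ι) m z)) l)
          = i₀ (qlact A (j.comp ι) m ((j.comp ι) c)
              (qlact A (j.comp ι) m ek (mkX (j.comp ι) m z))) l
          from (congrFun (hi₀l _ _) l).symm,
        ← qlact_mul, hek c, qlact_mul, qlact_mkX])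
    (fun a z hz => by
      simp only [mkBilin_apply]
      rw [mkX_eq_zero (j.comp ι) m hz, map_zero, map_zero, Pi.zero_apply, map_zero])

variable (hi₀l : ∀ (a : A) x,
    i₀ (qlact A (j.comp ι) m a x) = fun k => qlact A j m a (i₀ x k))
variable (ek : A) (hek : ∀ c : C, (j.comp ι) c * ek = ek * (j.comp ι) c)

@[simp] lemma PhiH_mkX (l : Fin r) (a : A) (z : Zc A m) :
    PhiH ι j i₀ hi₀l ek hek l (mkX (j.comp ι) (m + 1) (a ⊗ₜ[ℤ] z)) =
      insXP j m a (i₀ (qlact A (j.comp ι) m ek (mkX (j.comp ι) m z)) l) := rfl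

lemma PhiH_qlact (l : Fin r) (a : A) (x : XP A (j.comp ι) (m + 1)) :
    PhiH ι j i₀ hi₀l ek hek l (qlact A (j.comp ι) (m + 1) a x) =
      qlact A j (m + 1) a (PhiH ι j i₀ hi₀l ek hek l x) := by
  induction x using xp_induction with
  | zero => simp only [map_zero]
  | tm a' z => erw [qlact_mkX]; rw [lactZ_succ, PhiH_mkX, PhiH_mkX, qlact_insXP]
  | add x y hx hy => rw [map_add, map_add, map_add, map_add, hx, hy]

lemma PhiH_qract
    (hi₀r : ∀ (a : A) x,
      i₀ (qract A (j.comp ι) m a x) = fun k => qract A j m a (i₀ x k))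
    (l : Fin r) (a : A) (x : XP A (j.comp ι) (m + 1)) :
    PhiH ι j i₀ hi₀l ek hek l (qract A (j.comp ι) (m + 1) a x) =
      qract A j (m + 1) a (PhiH ι j i₀ hi₀l ek hek l x) := by
  induction x using xp_induction with
  | zero => simp only [map_zero]
  | tm a' z =>
      erw [qract_mkX]; rw [ractZ_succ, PhiH_mkX, PhiH_mkX, qract_insXP]
      congr 1
      rw [← qract_mkX, qlact_qract,
        congrFun (hi₀r a (qlact A (j.comp ι) m ek (mkX (j.comp ι) m z))) l]
  | add x y hx hy => rw [map_add, map_add, map_add, map_add, hx, hy]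

/-- The backward map in the H-separable step. -/
def PsiH (hp₀l : ∀ (a : A) v,
      p₀ (fun k => qlact A j m a (v k)) = qlact A (j.comp ι) m a (p₀ v))
    (t₀ : Tens ι (j.comp ι))
    (ht₀ : ∀ b, lact ι (j.comp ι) b t₀ = ract ι (j.comp ι) (j b) t₀) (l : Fin r) :
    XP A j (m + 1) →+ XP A (j.comp ι) (m + 1) :=
  liftXP j m
    (mkBilin (fun a z => Theta ι j a (p₀ (Pi.single l (mkX j m z))) t₀)
      (fun a a' z => by rw [Theta_addA])
      (fun a z z' => by
        rw [mkX_add, Pi.single_add, map_add, Theta_addY]))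
    (fun a b z => by
      simp only [mkBilin_apply]
      rw [← Theta_lact, ht₀, Theta_ract, ← hp₀l, single_comm (qlact A j m (j b)),
        qlact_mkX])
    (fun a z hz => by
      simp only [mkBilin_apply]
      rw [mkX_eq_zero j m hz, Pi.single_zero, map_zero, Theta_zeroY])

variable (hp₀l : ∀ (a : A) v,
    p₀ (fun k => qlact A j m a (v k)) = qlact A (j.comp ι) m a (p₀ v))
variable (t₀ : Tens ι (j.comp ι))
    (ht₀ : ∀ b, lact ι (j.comp ι) b t₀ = ract ι (j.comp ι) (j b) t₀)

@[simp] lemma PsiH_mkX (l : Fin r) (a : A) (z : Zc A m) :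
    PsiH ι j p₀ hp₀l t₀ ht₀ l (mkX j (m + 1) (a ⊗ₜ[ℤ] z)) =
      Theta ι j a (p₀ (Pi.single l (mkX j m z))) t₀ := rfl

lemma PsiH_ins (l : Fin r) (a : A) (w : XP A j m) :
    PsiH ι j p₀ hp₀l t₀ ht₀ l (insXP j m a w) =
      Theta ι j a (p₀ (Pi.single l w)) t₀ := by
  obtain ⟨z, rfl⟩ := mkX_surjective j m w
  rw [insXP_mkX, PsiH_mkX]

lemma PsiH_qlact (l : Fin r) (a : A) (x : XP A j (m + 1)) :
    PsiH ι j p₀ hp₀l t₀ ht₀ l (qlact A j (m + 1) a x) =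
      qlact A (j.comp ι) (m + 1) a (PsiH ι j p₀ hp₀l t₀ ht₀ l x) := by
  induction x using xp_induction with
  | zero => simp only [map_zero]
  | tm a' z => erw [qlact_mkX]; rw [lactZ_succ, PsiH_mkX, PsiH_mkX, Theta_qlact]
  | add x y hx hy => rw [map_add, map_add, map_add, map_add, hx, hy]

lemma PsiH_qract
    (hp₀r : ∀ (a : A) v,
      p₀ (fun k => qract A j m a (v k)) = qract A (j.comp ι) m a (p₀ v))
    (l : Fin r) (a : A) (x : XP A j (m + 1)) :
    PsiH ι j p₀ hp₀l t₀ ht₀ l (qract A j (m + 1) a x) =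
      qract A (j.comp ι) (m + 1) a (PsiH ι j p₀ hp₀l t₀ ht₀ l x) := by
  induction x using xp_induction with
  | zero => simp only [map_zero]
  | tm a' z =>
      erw [qract_mkX]; rw [ractZ_succ, PsiH_mkX, PsiH_mkX, Theta_qract, ← qract_mkX,
        ← single_comm (qract A j m a), hp₀r]
  | add x y hx hy => rw [map_add, map_add, map_add, map_add, hx, hy]

/-- The H-separable induction step. -/
lemma stepHSep
    (hIl : ∀ (b : B) x, I (lact ι (j.comp ι) b x) = fun k => j b * I x k)
    (hIr : ∀ (a : A) x, I (ract ι (j.comp ι) a x) = fun k => I x k * a)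
    (hPl : ∀ (b : B) v, P (fun k => j b * v k) = lact ι (j.comp ι) b (P v))
    (hPr : ∀ (a : A) v, P (fun k => v k * a) = ract ι (j.comp ι) a (P v))
    (hPI : ∀ x, P (I x) = x)
    (hi₀l' : ∀ (a : A) x,
      i₀ (qlact A (j.comp ι) m a x) = fun k => qlact A j m a (i₀ x k))
    (hi₀r : ∀ (a : A) x,
      i₀ (qract A (j.comp ι) m a x) = fun k => qract A j m a (i₀ x k))
    (hp₀l' : ∀ (a : A) v,
      p₀ (fun k => qlact A j m a (v k)) = qlact A (j.comp ι) m a (p₀ v))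
    (hp₀r : ∀ (a : A) v,
      p₀ (fun k => qract A j m a (v k)) = qract A (j.comp ι) m a (p₀ v))
    (hpi₀ : ∀ x, p₀ (i₀ x) = x) :
    ∃ (i : XP A (j.comp ι) (m + 1) →+ (Fin (n * r) → XP A j (m + 1)))
      (p : (Fin (n * r) → XP A j (m + 1)) →+ XP A (j.comp ι) (m + 1)),
      (∀ (a : A) x, i (qlact A (j.comp ι) (m + 1) a x) =
        fun k => qlact A j (m + 1) a (i x k)) ∧
      (∀ (a : A) x, i (qract A (j.comp ι) (m + 1) a x) =
        fun k => qract A j (m + 1) a (i x k)) ∧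
      (∀ (a : A) v, p (fun k => qlact A j (m + 1) a (v k)) =
        qlact A (j.comp ι) (m + 1) a (p v)) ∧
      (∀ (a : A) v, p (fun k => qract A j (m + 1) a (v k)) =
        qract A (j.comp ι) (m + 1) a (p v)) ∧
      ∀ x, p (i x) = x := by
  set e : Tens ι (j.comp ι) := tmul ι (j.comp ι) 1 1 with he
  have hek : ∀ (k : Fin n) (c : C), (j.comp ι) c * I e k = I e k * (j.comp ι) c := by
    intro k c
    have h1 := congrFun (hIl (ι c) e) k
    have h2 := congrFun (hIr (j (ι c)) e) k
    rw [lact_tmul_one_one] at h1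
    exact h1.symm.trans h2
  have ht₀k : ∀ (k : Fin n) (b : B),
      lact ι (j.comp ι) b (P (Pi.single k 1)) =
        ract ι (j.comp ι) (j b) (P (Pi.single k 1)) := by
    intro k b
    rw [← hPl, ← hPr]
    congr 1
    funext k'
    rcases eq_or_ne k' k with rfl | h
    · rw [Pi.single_eq_same, mul_one, one_mul]
    · rw [Pi.single_eq_of_ne h, mul_zero, zero_mul]
  refine ⟨AddMonoidHom.mk'
      (fun x k => PhiH ι j i₀ hi₀l' (I e (finProdFinEquiv.symm k).1)
        (hek (finProdFinEquiv.symm k).1) (finProdFinEquiv.symm k).2 x)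
      (fun x y => funext fun k => map_add _ x y),
    AddMonoidHom.mk'
      (fun v => ∑ kl : Fin n × Fin r, PsiH ι j p₀ hp₀l' (P (Pi.single kl.1 1))
        (ht₀k kl.1) kl.2 (v (finProdFinEquiv kl)))
      (fun v w => by
        simp only [Pi.add_apply, map_add]
        exact Finset.sum_add_distrib), ?_, ?_, ?_, ?_, ?_⟩
  · intro a x
    funext k
    exact PhiH_qlact ι j i₀ hi₀l' (I e (finProdFinEquiv.symm k).1)
      (hek (finProdFinEquiv.symm k).1) (finProdFinEquiv.symm k).2 a x
  · intro a x
    funext k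
    exact PhiH_qract ι j i₀ hi₀l' (I e (finProdFinEquiv.symm k).1)
      (hek (finProdFinEquiv.symm k).1) hi₀r (finProdFinEquiv.symm k).2 a x
  · intro a v
    simp only [AddMonoidHom.mk'_apply]
    rw [Finset.sum_congr rfl fun kl _ =>
      PsiH_qlact ι j p₀ hp₀l' (P (Pi.single kl.1 1)) (ht₀k kl.1) kl.2 a
        (v (finProdFinEquiv kl))]
    exact (map_sum (qlact A (j.comp ι) (m + 1) a) _ Finset.univ).symm
  · intro a v
    simp only [AddMonoidHom.mk'_apply]
    rw [Finset.sum_congr rfl fun kl _ =>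
      PsiH_qract ι j p₀ hp₀l' (P (Pi.single kl.1 1)) (ht₀k kl.1) hp₀r kl.2 a
        (v (finProdFinEquiv kl))]
    exact (map_sum (qract A (j.comp ι) (m + 1) a) _ Finset.univ).symm
  · intro x
    induction x using xp_induction with
    | zero => simp only [map_zero, Finset.sum_const_zero]
    | tm a z =>
        simp only [AddMonoidHom.mk'_apply, Equiv.symm_apply_apply, PhiH_mkX]
        rw [Fintype.sum_prod_type]
        have hinner : ∀ k : Fin n,
            (∑ l : Fin r, PsiH ι j p₀ hp₀l' (P (Pi.single k 1)) (ht₀k k) l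
              (insXP j m a
                (i₀ (qlact A (j.comp ι) m (I e k) (mkX (j.comp ι) m z)) l)))
            = Theta ι j a (mkX (j.comp ι) m z)
                (ract ι (j.comp ι) (I e k) (P (Pi.single k 1))) := by
          intro k
          rw [Finset.sum_congr rfl fun l _ =>
            PsiH_ins ι j p₀ hp₀l' (P (Pi.single k 1)) (ht₀k k) l a
              (i₀ (qlact A (j.comp ι) m (I e k) (mkX (j.comp ι) m z)) l)]
          rw [Theta_sum, ← map_sum p₀, Finset.univ_sum_single, hpi₀, ← Theta_ract]
        rw [Finset.sum_congr rfl fun k _ => hinner k]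
        have hr : ∀ k : Fin n,
            ract ι (j.comp ι) (I e k) (P (Pi.single k 1)) =
              P (Pi.single k (I e k)) := by
          intro k
          rw [← hPr]
          congr 1
          funext k'
          rcases eq_or_ne k' k with rfl | h
          · rw [Pi.single_eq_same, Pi.single_eq_same, one_mul]
          · rw [Pi.single_eq_of_ne h, Pi.single_eq_of_ne h, zero_mul]
        rw [Finset.sum_congr rfl fun k _ =>
          congrArg (Theta ι j a (mkX (j.comp ι) m z)) (hr k)]
        rw [← map_sum (Theta ι j a (mkX (j.comp ι) m z)), ← map_sum P,
          Finset.univ_sum_single, hPI, he, Theta_tmul, map_one, mul_one, qlact_one,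
          insXP_mkX]
    | add x y hx hy => rw [map_add, map_add, hx, hy]


end StepHSep

/-- in a tower `A ⊇ B ⊇ C` which is both left relative H-separable
(`B ⊗_C A ⊕ * ≅ A^n` as `B`-`A`-bimodules) and left relative separable
(`A ⊕ * ≅ B ⊗_C A` as `B`-`A`-bimodules), for every `m ≥ 1` the tensor powers
`A^{⊗_B m}` and `A^{⊗_C m}` are H-equivalent as `A`-`A`-bimodules.  (Below, `XP A j m`
denotes the `(m+1)`-fold power `A^{⊗_B (m+1)}`, so all powers with at least one factor
are covered.) -/
theorem tensorPowers_hEquivalent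
    {C B A : Type*} [Ring C] [Ring B] [Ring A]
    (ι : C →+* B) (j : B →+* A)
    (hι : Function.Injective ι) (hj : Function.Injective j)
    (hHsep : ∃ n, LeftRelHSep ι j n)
    (hsep : ∃ (i : A →+ Tens ι (j.comp ι)) (p : Tens ι (j.comp ι) →+ A),
      (∀ (b : B) (a : A), i (j b * a) = lact ι (j.comp ι) b (i a)) ∧
      (∀ (a a' : A), i (a * a') = ract ι (j.comp ι) a' (i a)) ∧
      (∀ (b : B) x, p (lact ι (j.comp ι) b x) = j b * p x) ∧
      (∀ (a : A) x, p (ract ι (j.comp ι) a x) = p x * a) ∧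
      ∀ a, p (i a) = a) :
    ∀ m : ℕ,
      (∃ (q : ℕ) (i : XP A j m →+ (Fin q → XP A (j.comp ι) m))
        (p : (Fin q → XP A (j.comp ι) m) →+ XP A j m),
        (∀ (a : A) x, i (qlact A j m a x) = fun k => qlact A (j.comp ι) m a (i x k)) ∧
        (∀ (a : A) x, i (qract A j m a x) = fun k => qract A (j.comp ι) m a (i x k)) ∧
        (∀ (a : A) v, p (fun k => qlact A (j.comp ι) m a (v k)) = qlact A j m a (p v)) ∧
        (∀ (a : A) v, p (fun k => qract A (j.comp ι) m a (v k)) = qract A j m a (p v)) ∧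
        ∀ x, p (i x) = x) ∧
      (∃ (r : ℕ) (i : XP A (j.comp ι) m →+ (Fin r → XP A j m))
        (p : (Fin r → XP A j m) →+ XP A (j.comp ι) m),
        (∀ (a : A) x, i (qlact A (j.comp ι) m a x) = fun k => qlact A j m a (i x k)) ∧
        (∀ (a : A) x, i (qract A (j.comp ι) m a x) = fun k => qract A j m a (i x k)) ∧
        (∀ (a : A) v, p (fun k => qlact A j m a (v k)) = qlact A (j.comp ι) m a (p v)) ∧
        (∀ (a : A) v, p (fun k => qract A j m a (v k)) = qract A (j.comp ι) m a (p v)) ∧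
        ∀ x, p (i x) = x) := by
  obtain ⟨n, I, P, hIl, hIr, hPl, hPr, hPI⟩ := hHsep
  obtain ⟨is, ps, his1, his2, hps1, hps2, hpis⟩ := hsep
  intro m
  induction m with
  | zero =>
      constructor
      · exact ⟨1, AddMonoidHom.mk' (fun x _ => x) (fun x y => rfl),
          AddMonoidHom.mk' (fun v => v 0) (fun v w => rfl),
          fun a x => rfl, fun a x => rfl, fun a v => rfl, fun a v => rfl, fun x => rfl⟩
      · exact ⟨1, AddMonoidHom.mk' (fun x _ => x) (fun x y => rfl),
          AddMonoidHom.mk' (fun v => v 0) (fun v w => rfl),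
          fun a x => rfl, fun a x => rfl, fun a v => rfl, fun a v => rfl, fun x => rfl⟩
  | succ m ih =>
      obtain ⟨⟨q, i₁, p₁, h1, h2, h3, h4, h5⟩, ⟨r, i₂, p₂, g1, g2, g3, g4, g5⟩⟩ := ih
      constructor
      · exact ⟨q, stepSep ι j i₁ p₁ is ps his1 his2 hps1 hps2 hpis h1 h3 h2 h4 h5⟩
      · exact ⟨n * r, stepHSep ι j I P i₂ p₂ hIl hIr hPl hPr hPI g1 g2 g3 g4 g5⟩

end
end

section
/- Let G > H > J be a tower of finite groups and A = ℂG ⊇ B = ℂH ⊇ C = ℂJ the corresponding complex group algebras. If the tower is left relative H-separable (B ⊗_C A ⊕ * ≅ A^n as B-A-bimodules for some n), then H = J. -/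
/-!  A noncommutative relative tensor product `L ⊗_C R` for a ring `C` mapping
into rings `L` (acting on the right through `f`) and `R` (acting on the left
through `g`), together with the outer left `L`-action `lact`, the outer right
`R`-action `ract`, a lifting principle for balanced biadditive maps, and the
multiplication map. -/

open scoped TensorProduct

noncomputable section
open NCT

section AuxProof
open MonoidAlgebra
open scoped Classical

variable {G : Type*} [Group G] [Fintype G]

/-- The total coefficient sum (augmentation) as an additive map. -/
def epsSum (M : Type*) [Monoid M] [Fintype M] : MonoidAlgebra ℂ M →+ ℂ where
  toFun y := ∑ m : M, y.coeff m
  map_zero' := by simp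
  map_add' y z := by
    rw [← Finset.sum_add_distrib]
    exact Finset.sum_congr rfl fun m _ => rfl

@[simp] lemma epsSum_single {M : Type*} [Monoid M] [Fintype M] (m : M) (r : ℂ) :
    epsSum M (MonoidAlgebra.single m r) = r := by
  classical
  simp [epsSum, MonoidAlgebra.coeff_single, Finsupp.single_apply]

lemma epsSum_mul {M : Type*} [Monoid M] [Fintype M] (y z : MonoidAlgebra ℂ M) :
    epsSum M (y * z) = epsSum M y * epsSum M z := by
  induction y using MonoidAlgebra.induction_linear with
  | zero => simp
  | add f g hf hg => rw [add_mul, map_add, map_add, hf, hg, add_mul]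
  | single m r =>
    induction z using MonoidAlgebra.induction_linear with
    | zero => simp
    | add f g hf hg => rw [mul_add, map_add, map_add, hf, hg, mul_add]
    | single m' r' =>
      rw [MonoidAlgebra.single_mul_single, epsSum_single, epsSum_single, epsSum_single]

/-- A right-translation-invariant element of the group algebra is also
left-translation-invariant. -/
lemma left_inv_of_right_inv (v : MonoidAlgebra ℂ G)
    (hv : ∀ g : G, v * MonoidAlgebra.single g (1 : ℂ) = v) (h : G) :
    MonoidAlgebra.single h (1 : ℂ) * v = v := by
  ext y
  rw [MonoidAlgebra.single_mul_apply, one_mul]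
  have h2 : (v * MonoidAlgebra.single (y⁻¹ * h * y) (1 : ℂ)).coeff y = v.coeff y := by rw [hv]
  rw [MonoidAlgebra.mul_single_apply, mul_one] at h2
  have e : y * (y⁻¹ * h * y)⁻¹ = h⁻¹ * y := by group
  rw [e] at h2
  exact h2

/-- `mapDomainRingHom` on a `single`. -/
lemma mapDRH_single {G₁ G₂ : Type*} [Monoid G₁] [Monoid G₂] (f : G₁ →* G₂) (a : G₁) (b : ℂ) :
    MonoidAlgebra.mapDomainRingHom ℂ f (MonoidAlgebra.single a b)
      = MonoidAlgebra.single (f a) b := by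
  show MonoidAlgebra.mapDomain f (MonoidAlgebra.single a b) = _
  exact MonoidAlgebra.mapDomain_single

/-- Sum of coefficients of `b : ℂH` over elements lying in `J`. -/
def SJ (J H : Subgroup G) : MonoidAlgebra ℂ ↥H →+ ℂ where
  toFun b := ∑ h : ↥H, if (h : G) ∈ J then b.coeff h else 0
  map_zero' := by simp
  map_add' b b' := by
    rw [← Finset.sum_add_distrib]
    refine Finset.sum_congr rfl fun h _ => ?_
    split
    · rfl
    · simp

@[simp] lemma SJ_single (J H : Subgroup G) (h : ↥H) (r : ℂ) :
    SJ J H (MonoidAlgebra.single h r) = if (h : G) ∈ J then r else 0 := by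
  show (∑ h' : ↥H, if ((h' : G)) ∈ J then (MonoidAlgebra.single h r).coeff h' else 0) = _
  rw [Finset.sum_eq_single h]
  · simp [MonoidAlgebra.coeff_single, Finsupp.single_apply]
  · intro h' _ hne
    simp [MonoidAlgebra.coeff_single, Finsupp.single_apply, Ne.symm hne]
  · intro habs
    exact absurd (Finset.mem_univ h) habs

lemma SJ_mul_iota {J H : Subgroup G} (hJH : J ≤ H)
    (b : MonoidAlgebra ℂ ↥H) (c : MonoidAlgebra ℂ ↥J) :
    SJ J H (b * MonoidAlgebra.mapDomainRingHom ℂ (Subgroup.inclusion hJH) c) =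
      SJ J H b * epsSum ↥J c := by
  induction b using MonoidAlgebra.induction_linear with
  | zero => simp
  | add f g hf hg => rw [add_mul, map_add, map_add, hf, hg, add_mul]
  | single h r =>
    induction c using MonoidAlgebra.induction_linear with
    | zero => simp
    | add f g hf hg => rw [map_add, mul_add, map_add, map_add, hf, hg, mul_add]
    | single x s =>
      rw [mapDRH_single, MonoidAlgebra.single_mul_single, SJ_single, SJ_single, epsSum_single]
      have hx : ((Subgroup.inclusion hJH x : ↥H) : G) ∈ J := by
        simp [Subgroup.coe_inclusion]
      rw [show ((h * Subgroup.inclusion hJH x : ↥H) : G) = (h : G) *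
        ((Subgroup.inclusion hJH x : ↥H) : G) from rfl]
      rw [J.mul_mem_cancel_right hx]
      split <;> simp

lemma epsSum_mapDomain {J H : Subgroup G} (hJH : J ≤ H) (c : MonoidAlgebra ℂ ↥J) :
    epsSum G (((MonoidAlgebra.mapDomainRingHom ℂ H.subtype).comp
      (MonoidAlgebra.mapDomainRingHom ℂ (Subgroup.inclusion hJH))) c) = epsSum ↥J c := by
  induction c using MonoidAlgebra.induction_linear with
  | zero => simp
  | add f g hf hg => rw [map_add, map_add, map_add, hf, hg]
  | single x s =>
    rw [RingHom.comp_apply, mapDRH_single, mapDRH_single, epsSum_single, epsSum_single]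

end AuxProof

/-- for a tower of finite groups `G > H > J` and the complex group
algebras `ℂG ⊇ ℂH ⊇ ℂJ`, if the tower is left relative H-separable then `H = J`. -/
theorem groupAlgebra_relHSep_trivial
    {G : Type*} [Group G] [Fintype G] (H J : Subgroup G) (hJH : J ≤ H)
    (hH : ∃ n, LeftRelHSep
      (MonoidAlgebra.mapDomainRingHom ℂ (Subgroup.inclusion hJH))
      (MonoidAlgebra.mapDomainRingHom ℂ H.subtype) n) :
    J = H := by
  classical
  obtain ⟨n, i, p, hil, hir, hpl, hpr, hpi⟩ := hH
  -- the sum of all group elements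
  obtain ⟨Sg, hSg⟩ : ∃ S : MonoidAlgebra ℂ G, S = ∑ g : G, MonoidAlgebra.single g (1 : ℂ) :=
    ⟨_, rfl⟩
  have hSgr : ∀ g : G, Sg * MonoidAlgebra.single g (1 : ℂ) = Sg := by
    intro g
    rw [hSg, Finset.sum_mul]
    have h1 : ∀ g' : G, MonoidAlgebra.single g' (1 : ℂ) * MonoidAlgebra.single g (1 : ℂ)
        = MonoidAlgebra.single (g' * g) (1 : ℂ) := by
      intro g'; rw [MonoidAlgebra.single_mul_single, mul_one]
    simp_rw [h1]
    exact Fintype.sum_equiv (Equiv.mulRight g) _ _ (fun x => rfl)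
  obtain ⟨x, hx⟩ : ∃ x : ↥H → Tens (MonoidAlgebra.mapDomainRingHom ℂ (Subgroup.inclusion hJH)) ((MonoidAlgebra.mapDomainRingHom ℂ H.subtype).comp (MonoidAlgebra.mapDomainRingHom ℂ (Subgroup.inclusion hJH))),
      x = fun h => tmul (MonoidAlgebra.mapDomainRingHom ℂ (Subgroup.inclusion hJH)) ((MonoidAlgebra.mapDomainRingHom ℂ H.subtype).comp (MonoidAlgebra.mapDomainRingHom ℂ (Subgroup.inclusion hJH))) (MonoidAlgebra.single h (1 : ℂ)) Sg := ⟨_, rfl⟩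
  have hract : ∀ (h : ↥H) (g : G),
      ract (MonoidAlgebra.mapDomainRingHom ℂ (Subgroup.inclusion hJH)) ((MonoidAlgebra.mapDomainRingHom ℂ H.subtype).comp (MonoidAlgebra.mapDomainRingHom ℂ (Subgroup.inclusion hJH))) (MonoidAlgebra.single g (1 : ℂ)) (x h) = x h := by
    intro h g
    rw [hx]
    show tmul (MonoidAlgebra.mapDomainRingHom ℂ (Subgroup.inclusion hJH)) ((MonoidAlgebra.mapDomainRingHom ℂ H.subtype).comp (MonoidAlgebra.mapDomainRingHom ℂ (Subgroup.inclusion hJH))) (MonoidAlgebra.single h (1 : ℂ)) (Sg * MonoidAlgebra.single g 1) = _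
    rw [hSgr]
  have hinv : ∀ (h : ↥H) (k : Fin n) (g : G),
      i (x h) k * MonoidAlgebra.single g (1 : ℂ) = i (x h) k := by
    intro h k g
    have h2 := hir (MonoidAlgebra.single g (1 : ℂ)) (x h)
    rw [hract h g] at h2
    exact (congrFun h2 k).symm
  have hxeq : ∀ h₀ : ↥H, x h₀ = x 1 := by
    intro h₀
    have h1 : lact (MonoidAlgebra.mapDomainRingHom ℂ (Subgroup.inclusion hJH)) ((MonoidAlgebra.mapDomainRingHom ℂ H.subtype).comp (MonoidAlgebra.mapDomainRingHom ℂ (Subgroup.inclusion hJH))) (MonoidAlgebra.single h₀ (1 : ℂ)) (x 1) = x h₀ := by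
      rw [hx]
      show tmul (MonoidAlgebra.mapDomainRingHom ℂ (Subgroup.inclusion hJH)) ((MonoidAlgebra.mapDomainRingHom ℂ H.subtype).comp (MonoidAlgebra.mapDomainRingHom ℂ (Subgroup.inclusion hJH)))
        (MonoidAlgebra.single h₀ (1 : ℂ) * MonoidAlgebra.single 1 1) Sg = _
      rw [MonoidAlgebra.single_mul_single, mul_one, mul_one]
    have h2 : i (x h₀) = i (x 1) := by
      rw [← h1, hil]
      funext k
      have hj : MonoidAlgebra.mapDomainRingHom ℂ H.subtype (MonoidAlgebra.single h₀ (1 : ℂ))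
          = MonoidAlgebra.single ((h₀ : G)) (1 : ℂ) := mapDRH_single H.subtype h₀ 1
      rw [hj]
      exact left_inv_of_right_inv _ (fun g => hinv 1 k g) _
    calc x h₀ = p (i (x h₀)) := (hpi _).symm
      _ = p (i (x 1)) := by rw [h2]
      _ = x 1 := hpi _
  -- the separating functional
  have hbal : ∀ (b : MonoidAlgebra ℂ ↥H) (c : MonoidAlgebra ℂ ↥J) (a : MonoidAlgebra ℂ G),
      SJ J H (b * MonoidAlgebra.mapDomainRingHom ℂ (Subgroup.inclusion hJH) c) * epsSum G a = SJ J H b * epsSum G (((MonoidAlgebra.mapDomainRingHom ℂ H.subtype).comp (MonoidAlgebra.mapDomainRingHom ℂ (Subgroup.inclusion hJH))) c * a) := by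
    intro b c a
    rw [SJ_mul_iota hJH, epsSum_mul, epsSum_mapDomain hJH]
    ring
  obtain ⟨F, hF⟩ : ∃ F : Tens (MonoidAlgebra.mapDomainRingHom ℂ (Subgroup.inclusion hJH)) ((MonoidAlgebra.mapDomainRingHom ℂ H.subtype).comp (MonoidAlgebra.mapDomainRingHom ℂ (Subgroup.inclusion hJH))) →+ ℂ,
      F = NCT.lift (MonoidAlgebra.mapDomainRingHom ℂ (Subgroup.inclusion hJH)) ((MonoidAlgebra.mapDomainRingHom ℂ H.subtype).comp (MonoidAlgebra.mapDomainRingHom ℂ (Subgroup.inclusion hJH)))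
        (mkBilin (fun b a => SJ J H b * epsSum G a)
          (fun b b' a => by rw [map_add, add_mul])
          (fun b a a' => by rw [map_add, mul_add]))
        (fun b c a => by simpa using hbal b c a) := ⟨_, rfl⟩
  have hFx : ∀ h : ↥H,
      F (x h) = (if (h : G) ∈ J then (1 : ℂ) else 0) * (Fintype.card G : ℂ) := by
    intro h
    rw [hF, hx]
    show SJ J H (MonoidAlgebra.single h (1 : ℂ)) * epsSum G Sg = _
    rw [SJ_single, hSg, map_sum]
    simp [Finset.card_univ]
  have hcard : (Fintype.card G : ℂ) ≠ 0 := by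
    exact_mod_cast Fintype.card_ne_zero
  have hmem : ∀ h₀ : ↥H, (h₀ : G) ∈ J := by
    intro h₀
    have heq := congrArg F (hxeq h₀)
    rw [hFx, hFx] at heq
    by_contra hc
    rw [if_neg hc, if_pos (by simpa using J.one_mem)] at heq
    simp only [zero_mul, one_mul] at heq
    exact hcard heq.symm
  exact le_antisymm hJH (fun g hg => hmem ⟨g, hg⟩)
end
end

section
/- Suppose A ⊇ B ⊇ C is a tower of rings with B_C finitely generated projective as a right C-module. Then the left relative H-separable condition (B ⊗_C A ⊕ * ≅ A^n as B-A-bimodules) holds if and only if Hom(B_C, A_C) ⊕ * ≅ A^n as A-B-bimodules, where Hom(B_C, A_C) is the set of right C-module maps B → A with A-B-bimodule structure (a·f·b)(x) = a f(bx). -/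
/-!  A noncommutative relative tensor product `L ⊗_C R` for a ring `C` mapping
into rings `L` (acting on the right through `f`) and `R` (acting on the left
through `g`), together with the outer left `L`-action `lact`, the outer right
`R`-action `ract`, a lifting principle for balanced biadditive maps, and the
multiplication map. -/

open scoped TensorProduct

noncomputable section
open NCT

/-- `Hom(B_C, A_C)`: the additive group of right `C`-module maps `B → A`. -/
def HomC {C B A : Type*} [Ring C] [Ring B] [Ring A] (ι : C →+* B) (κ : C →+* A) :
    AddSubgroup (B →+ A) where
  carrier := {f | ∀ (b : B) (c : C), f (b * ι c) = f b * κ c}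
  add_mem' := by
    intro f g hf hg b c
    simp only [AddMonoidHom.add_apply, hf b c, hg b c, add_mul]
  zero_mem' := by intro b c; simp
  neg_mem' := by
    intro f hf b c
    simp only [AddMonoidHom.neg_apply, hf b c, neg_mul]

/-- The left `A`-action on `Hom(B_C, A_C)`, `(a • f)(x) = a * f x`. -/
def asmul {C B A : Type*} [Ring C] [Ring B] [Ring A] (ι : C →+* B) (κ : C →+* A)
    (a : A) : ↥(HomC ι κ) →+ ↥(HomC ι κ) :=
  AddMonoidHom.mk' (fun f => ⟨(AddMonoidHom.mulLeft a).comp f.1, by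
      intro b c
      simp only [AddMonoidHom.coe_comp, Function.comp_apply, AddMonoidHom.coe_mulLeft,
        f.2 b c, mul_assoc]⟩)
    (fun f g => by
      apply Subtype.ext; ext x
      simp [mul_add])

/-- The right `B`-action on `Hom(B_C, A_C)`, `(f • b)(x) = f (b * x)`. -/
def bsmul {C B A : Type*} [Ring C] [Ring B] [Ring A] (ι : C →+* B) (κ : C →+* A)
    (b : B) : ↥(HomC ι κ) →+ ↥(HomC ι κ) :=
  AddMonoidHom.mk' (fun f => ⟨f.1.comp (AddMonoidHom.mulLeft b), by
      intro x c
      simp only [AddMonoidHom.coe_comp, Function.comp_apply, AddMonoidHom.coe_mulLeft,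
        ← mul_assoc, f.2 (b * x) c]⟩)
    (fun f g => by apply Subtype.ext; ext x; simp)


section Aux17
open NCT

variable {C B A : Type*} [Ring C] [Ring B] [Ring A] (ι : C →+* B) (j : B →+* A)

/-- `tmul` bundled in the left variable. -/
def tmulL' (a : A) : B →+ Tens ι (j.comp ι) :=
  AddMonoidHom.mk' (fun b => tmul ι (j.comp ι) b a)
    (fun b b' => tmul_add_left ι (j.comp ι) b b' a)

@[simp] lemma tmulL'_apply (a : A) (b : B) :
    tmulL' ι j a b = tmul ι (j.comp ι) b a := rfl

/-- `tmul` bundled in the right variable. -/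
def tmulR' (b : B) : A →+ Tens ι (j.comp ι) :=
  AddMonoidHom.mk' (fun a => tmul ι (j.comp ι) b a)
    (fun a a' => tmul_add_right ι (j.comp ι) b a a')

@[simp] lemma tmulR'_apply (b : B) (a : A) :
    tmulR' ι j b a = tmul ι (j.comp ι) b a := rfl

/-- Evaluation pairing `Hom(B_C,A_C) × (B ⊗_C A) → A`. -/
def hEv (f : ↥(HomC ι (j.comp ι))) : Tens ι (j.comp ι) →+ A :=
  NCT.lift ι (j.comp ι)
    (mkBilin (fun b a => f.1 b * a)
      (fun b b' a => by rw [map_add, add_mul])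
      (fun b a a' => by rw [mul_add]))
    (fun b c a => by simp only [mkBilin_apply]; rw [f.2 b c, mul_assoc])

@[simp] lemma hEv_tmul (f : ↥(HomC ι (j.comp ι))) (b : B) (a : A) :
    hEv ι j f (tmul ι (j.comp ι) b a) = f.1 b * a := rfl

lemma hEv_add (f g : ↥(HomC ι (j.comp ι))) (x : Tens ι (j.comp ι)) :
    hEv ι j (f + g) x = hEv ι j f x + hEv ι j g x := by
  refine tens_induction ι (j.comp ι)
    (p := fun x => hEv ι j (f + g) x = hEv ι j f x + hEv ι j g x) (by simp) ?_ ?_ x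
  · intro b a
    show ((f : B →+ A) + (g : B →+ A)) b * a = (f : B →+ A) b * a + (g : B →+ A) b * a
    rw [AddMonoidHom.add_apply, add_mul]
  · intro x y hx hy
    rw [map_add, map_add, map_add, hx, hy]; abel

/-- Evaluation bundled in the `Hom` variable. -/
def hEvF (x : Tens ι (j.comp ι)) : ↥(HomC ι (j.comp ι)) →+ A :=
  AddMonoidHom.mk' (fun f => hEv ι j f x) (fun f g => hEv_add ι j f g x)

@[simp] lemma hEvF_apply (x : Tens ι (j.comp ι)) (f : ↥(HomC ι (j.comp ι))) :
    hEvF ι j x f = hEv ι j f x := rfl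

lemma hEv_asmul (a : A) (f : ↥(HomC ι (j.comp ι))) (x : Tens ι (j.comp ι)) :
    hEv ι j (asmul ι (j.comp ι) a f) x = a * hEv ι j f x := by
  refine tens_induction ι (j.comp ι)
    (p := fun x => hEv ι j (asmul ι (j.comp ι) a f) x = a * hEv ι j f x) (by simp) ?_ ?_ x
  · intro b a'
    show (a * (f : B →+ A) b) * a' = a * ((f : B →+ A) b * a')
    rw [mul_assoc]
  · intro x y hx hy
    rw [map_add, map_add, hx, hy, mul_add]

lemma hEv_bsmul (b : B) (f : ↥(HomC ι (j.comp ι))) (x : Tens ι (j.comp ι)) :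
    hEv ι j (bsmul ι (j.comp ι) b f) x = hEv ι j f (lact ι (j.comp ι) b x) := by
  refine tens_induction ι (j.comp ι)
    (p := fun x => hEv ι j (bsmul ι (j.comp ι) b f) x
      = hEv ι j f (lact ι (j.comp ι) b x)) (by simp) ?_ ?_ x
  · intro b' a
    rfl
  · intro x y hx hy
    rw [map_add, map_add, map_add, hx, hy]

lemma hEv_ract (f : ↥(HomC ι (j.comp ι))) (a : A) (x : Tens ι (j.comp ι)) :
    hEv ι j f (ract ι (j.comp ι) a x) = hEv ι j f x * a := by
  refine tens_induction ι (j.comp ι)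
    (p := fun x => hEv ι j f (ract ι (j.comp ι) a x) = hEv ι j f x * a) (by simp) ?_ ?_ x
  · intro b a'
    show (f : B →+ A) b * (a' * a) = ((f : B →+ A) b * a') * a
    rw [mul_assoc]
  · intro x y hx hy
    rw [map_add, map_add, map_add, hx, hy, add_mul]

@[simp] lemma tmul_zero' (b : B) : tmul ι (j.comp ι) b (0 : A) = 0 :=
  (tmulR' ι j b).map_zero

lemma aux_single_mul {n : ℕ} (k : Fin n) (a : A) :
    (fun m => (Pi.single k (1 : A) : Fin n → A) m * a) = Pi.single k a := by
  funext m; by_cases h : m = k <;> simp [Pi.single_apply, h]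

lemma aux_mul_single {n : ℕ} (k : Fin n) (a : A) :
    (fun m => a * (Pi.single k (1 : A) : Fin n → A) m) = Pi.single k a := by
  funext m; by_cases h : m = k <;> simp [Pi.single_apply, h]

lemma tmul_sum_left {γ : Type*} (s : Finset γ) (f : γ → B) (a : A) :
    ∑ m ∈ s, tmul ι (j.comp ι) (f m) a = tmul ι (j.comp ι) (∑ m ∈ s, f m) a := by
  exact (map_sum (tmulL' ι j a) f s).symm

/-- The element of `Hom(B_C,A_C)` induced by a `C`-linear functional `B → C`. -/
def phiHat (ψ : B →+ C) (hψ : ∀ (b : B) (c : C), ψ (b * ι c) = ψ b * c) :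
    ↥(HomC ι (j.comp ι)) :=
  ⟨((j.comp ι) : C →+* A).toAddMonoidHom.comp ψ, fun b c => by
    show (j.comp ι) (ψ (b * ι c)) = (j.comp ι) (ψ b) * (j.comp ι) c
    rw [hψ, map_mul]⟩

@[simp] lemma phiHat_coe (ψ : B →+ C)
    (hψ : ∀ (b : B) (c : C), ψ (b * ι c) = ψ b * c) (b : B) :
    ((phiHat ι j ψ hψ : ↥(HomC ι (j.comp ι))) : B →+ A) b = (j.comp ι) (ψ b) := rfl

lemma refl_db {N : ℕ} (xb : Fin N → B) (φ : Fin N → (B →+ C))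
    (hφ : ∀ (k : Fin N) (b : B) (c : C), φ k (b * ι c) = φ k b * c)
    (hdb : ∀ b : B, b = ∑ k, xb k * ι (φ k b))
    (x : Tens ι (j.comp ι)) :
    ∑ m, tmul ι (j.comp ι) (xb m) (hEv ι j (phiHat ι j (φ m) (hφ m)) x) = x := by
  refine tens_induction ι (j.comp ι)
    (p := fun x => ∑ m, tmul ι (j.comp ι) (xb m)
      (hEv ι j (phiHat ι j (φ m) (hφ m)) x) = x) (by simp) ?_ ?_ x
  · intro b a
    have h1 : ∀ m : Fin N, tmul ι (j.comp ι) (xb m)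
        (hEv ι j (phiHat ι j (φ m) (hφ m)) (tmul ι (j.comp ι) b a))
        = tmulL' ι j a (xb m * ι (φ m b)) := by
      intro m
      rw [hEv_tmul, phiHat_coe, tmulL'_apply, tmul_rel]
    rw [Finset.sum_congr rfl (fun m _ => h1 m), ← map_sum, ← hdb b, tmulL'_apply]
  · intro x y hx hy
    simp only [map_add, tmul_add_right, Finset.sum_add_distrib, hx, hy]

lemma bsmul_phiHat {N : ℕ} (xb : Fin N → B) (φ : Fin N → (B →+ C))
    (hφ : ∀ (k : Fin N) (b : B) (c : C), φ k (b * ι c) = φ k b * c)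
    (hdb : ∀ b : B, b = ∑ k, xb k * ι (φ k b)) (b : B) (m' : Fin N) :
    bsmul ι (j.comp ι) b (phiHat ι j (φ m') (hφ m'))
      = ∑ m, asmul ι (j.comp ι) ((j.comp ι) (φ m' (b * xb m)))
          (phiHat ι j (φ m) (hφ m)) := by
  apply Subtype.ext
  ext y
  have hco : ((∑ m, asmul ι (j.comp ι) ((j.comp ι) (φ m' (b * xb m)))
        (phiHat ι j (φ m) (hφ m)) : ↥(HomC ι (j.comp ι))) : B →+ A) y
      = ∑ m, (j.comp ι) (φ m' (b * xb m)) * (j.comp ι) (φ m y) := by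
    rw [AddSubmonoidClass.coe_finset_sum]
    rw [AddMonoidHom.finset_sum_apply]
    exact Finset.sum_congr rfl fun m _ => rfl
  rw [hco]
  show (j.comp ι) (φ m' (b * y)) = _
  calc (j.comp ι) (φ m' (b * y))
      = (j.comp ι) (φ m' (b * ∑ m, xb m * ι (φ m y))) := by rw [← hdb y]
    _ = (j.comp ι) (∑ m, φ m' (b * (xb m * ι (φ m y)))) := by
        rw [Finset.mul_sum, map_sum]
    _ = ∑ m, (j.comp ι) (φ m' (b * xb m)) * (j.comp ι) (φ m y) := by
        rw [map_sum]
        refine Finset.sum_congr rfl fun m _ => ?_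
        rw [← mul_assoc, hφ m' (b * xb m) (φ m y), map_mul]

end Aux17

/-- for a tower `A ⊇ B ⊇ C` with `B_C` finitely generated projective,
the left relative H-separable condition `B ⊗_C A ⊕ * ≅ A^n` (as `B`-`A`-bimodules)
holds iff `Hom(B_C, A_C) ⊕ * ≅ A^n` as `A`-`B`-bimodules. -/
theorem leftRelHSep_iff_hom_summand
    {C B A : Type*} [Ring C] [Ring B] [Ring A]
    (ι : C →+* B) (j : B →+* A)
    (hι : Function.Injective ι) (hj : Function.Injective j)
    (hfgp : ∃ (N : ℕ) (x : Fin N → B) (φ : Fin N → (B →+ C)),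
      (∀ (k : Fin N) (b : B) (c : C), φ k (b * ι c) = φ k b * c) ∧
      ∀ b : B, b = ∑ k, x k * ι (φ k b))
    (n : ℕ) :
    LeftRelHSep ι j n ↔
    ∃ (i : ↥(HomC ι (j.comp ι)) →+ (Fin n → A))
      (p : (Fin n → A) →+ ↥(HomC ι (j.comp ι))),
      (∀ (a : A) f, i (asmul ι (j.comp ι) a f) = fun k => a * i f k) ∧
      (∀ (b : B) f, i (bsmul ι (j.comp ι) b f) = fun k => i f k * j b) ∧
      (∀ (a : A) v, p (fun k => a * v k) = asmul ι (j.comp ι) a (p v)) ∧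
      (∀ (b : B) v, p (fun k => v k * j b) = bsmul ι (j.comp ι) b (p v)) ∧
      ∀ f, p (i f) = f := by
  constructor
  · rintro ⟨i, p, hiL, hiR, hpL, hpR, hpi⟩
    refine ⟨AddMonoidHom.mk'
        (fun f => fun k => hEv ι j f (p (Pi.single k 1)))
        (fun f g => by funext k; exact hEv_add ι j f g _),
      AddMonoidHom.mk' (fun v => ⟨AddMonoidHom.mk'
          (fun b => ∑ k, v k * i (tmul ι (j.comp ι) b 1) k)
          (fun b b' => by
            rw [tmul_add_left, map_add]
            simp only [Pi.add_apply, mul_add, Finset.sum_add_distrib]),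
        fun b c => by
          show (∑ k, v k * i (tmul ι (j.comp ι) (b * ι c) 1) k)
              = (∑ k, v k * i (tmul ι (j.comp ι) b 1) k) * (j.comp ι) c
          have h : tmul ι (j.comp ι) (b * ι c) 1
              = ract ι (j.comp ι) ((j.comp ι) c) (tmul ι (j.comp ι) b 1) := by
            rw [ract_tmul, one_mul, tmul_rel, mul_one]
          simp only [h, hiR, Finset.sum_mul]
          exact Finset.sum_congr rfl fun k _ => (mul_assoc _ _ _).symm⟩)
        (fun v w => by
          apply Subtype.ext; ext b
          show (∑ k, (v + w) k * i (tmul ι (j.comp ι) b 1) k)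
              = (∑ k, v k * i (tmul ι (j.comp ι) b 1) k)
                + ∑ k, w k * i (tmul ι (j.comp ι) b 1) k
          simp only [Pi.add_apply, add_mul, Finset.sum_add_distrib]),
      ?_, ?_, ?_, ?_, ?_⟩
    · intro a f
      funext k
      exact hEv_asmul ι j a f _
    · intro b f
      funext k
      show hEv ι j (bsmul ι (j.comp ι) b f) (p (Pi.single k 1))
          = hEv ι j f (p (Pi.single k 1)) * j b
      rw [hEv_bsmul, ← hpL, ← hEv_ract, ← hpR, aux_mul_single, aux_single_mul]
    · intro a v
      apply Subtype.ext; ext b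
      show (∑ k, (a * v k) * i (tmul ι (j.comp ι) b 1) k)
          = a * ∑ k, v k * i (tmul ι (j.comp ι) b 1) k
      rw [Finset.mul_sum]
      exact Finset.sum_congr rfl fun k _ => mul_assoc _ _ _
    · intro b v
      apply Subtype.ext; ext b'
      show (∑ k, (v k * j b) * i (tmul ι (j.comp ι) b' 1) k)
          = ∑ k, v k * i (tmul ι (j.comp ι) (b * b') 1) k
      rw [show tmul ι (j.comp ι) (b * b') 1
            = lact ι (j.comp ι) b (tmul ι (j.comp ι) b' 1) from rfl]
      simp only [hiL]
      exact Finset.sum_congr rfl fun k _ => mul_assoc _ _ _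
    · intro f
      apply Subtype.ext; ext b
      show (∑ k, hEv ι j f (p (Pi.single k 1)) * i (tmul ι (j.comp ι) b 1) k)
          = (f : B →+ A) b
      calc ∑ k, hEv ι j f (p (Pi.single k 1)) * i (tmul ι (j.comp ι) b 1) k
          = ∑ k, ((hEv ι j f).comp p)
              (Pi.single k (i (tmul ι (j.comp ι) b 1) k)) := by
            refine Finset.sum_congr rfl fun k _ => ?_
            rw [← hEv_ract, ← hpR, aux_single_mul]
            rfl
        _ = ((hEv ι j f).comp p)
              (∑ k, Pi.single k (i (tmul ι (j.comp ι) b 1) k)) :=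
            (map_sum _ _ _).symm
        _ = (f : B →+ A) b := by
            rw [Finset.univ_sum_single, AddMonoidHom.comp_apply, hpi]
            show (f : B →+ A) b * 1 = (f : B →+ A) b
            rw [mul_one]
  · rintro ⟨i', p', h1, h2, h3, h4, h5⟩
    obtain ⟨N, xb, φ, hφ, hdb⟩ := hfgp
    refine ⟨AddMonoidHom.mk'
        (fun x => fun k => hEv ι j (p' (Pi.single k 1)) x)
        (fun x y => by funext k; exact map_add _ x y),
      AddMonoidHom.mk'
        (fun v => ∑ m, tmul ι (j.comp ι) (xb m)
          (∑ k, i' (phiHat ι j (φ m) (hφ m)) k * v k))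
        (fun v w => by
          simp only [Pi.add_apply, mul_add, Finset.sum_add_distrib, tmul_add_right]),
      ?_, ?_, ?_, ?_, ?_⟩
    · intro b x
      funext k
      show hEv ι j (p' (Pi.single k 1)) (lact ι (j.comp ι) b x)
          = j b * hEv ι j (p' (Pi.single k 1)) x
      rw [← hEv_bsmul, ← h4, aux_single_mul, ← hEv_asmul, ← h3, aux_mul_single]
    · intro a x
      funext k
      exact hEv_ract ι j _ a x
    · intro b v
      show (∑ m, tmul ι (j.comp ι) (xb m)
            (∑ k, i' (phiHat ι j (φ m) (hφ m)) k * (j b * v k)))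
          = lact ι (j.comp ι) b (∑ m, tmul ι (j.comp ι) (xb m)
            (∑ k, i' (phiHat ι j (φ m) (hφ m)) k * v k))
      have step1 : ∀ m : Fin N,
          (∑ k, i' (phiHat ι j (φ m) (hφ m)) k * (j b * v k))
            = ∑ m', (j.comp ι) (φ m (b * xb m'))
                * ∑ k, i' (phiHat ι j (φ m') (hφ m')) k * v k := by
        intro m
        have e1 : ∀ k, i' (phiHat ι j (φ m) (hφ m)) k * (j b * v k)
            = (∑ m', (j.comp ι) (φ m (b * xb m'))
              * i' (phiHat ι j (φ m') (hφ m')) k) * v k := by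
          intro k
          rw [← mul_assoc]
          congr 1
          have : i' (phiHat ι j (φ m) (hφ m)) k * j b
              = i' (bsmul ι (j.comp ι) b (phiHat ι j (φ m) (hφ m))) k := by
            rw [h2]
          rw [this, bsmul_phiHat ι j xb φ hφ hdb b m, map_sum]
          rw [Finset.sum_apply]
          refine Finset.sum_congr rfl fun m' _ => ?_
          rw [h1]
        rw [Finset.sum_congr rfl fun k _ => e1 k]
        simp only [Finset.sum_mul]
        rw [Finset.sum_comm]
        refine Finset.sum_congr rfl fun m' _ => ?_
        rw [Finset.mul_sum]
        exact Finset.sum_congr rfl fun k _ => mul_assoc _ _ _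
      have step2 : ∀ m : Fin N, tmul ι (j.comp ι) (xb m)
          (∑ m', (j.comp ι) (φ m (b * xb m'))
            * ∑ k, i' (phiHat ι j (φ m') (hφ m')) k * v k)
          = ∑ m', tmul ι (j.comp ι) (xb m * ι (φ m (b * xb m')))
              (∑ k, i' (phiHat ι j (φ m') (hφ m')) k * v k) := by
        intro m
        rw [show tmul ι (j.comp ι) (xb m)
            (∑ m', (j.comp ι) (φ m (b * xb m'))
              * ∑ k, i' (phiHat ι j (φ m') (hφ m')) k * v k)
          = tmulR' ι j (xb m)
            (∑ m', (j.comp ι) (φ m (b * xb m'))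
              * ∑ k, i' (phiHat ι j (φ m') (hφ m')) k * v k) from rfl, map_sum]
        refine Finset.sum_congr rfl fun m' _ => ?_
        rw [tmulR'_apply, ← tmul_rel]
      have stepA : ∀ m : Fin N, tmul ι (j.comp ι) (xb m)
          (∑ k, i' (phiHat ι j (φ m) (hφ m)) k * (j b * v k))
          = ∑ m', tmul ι (j.comp ι) (xb m * ι (φ m (b * xb m')))
              (∑ k, i' (phiHat ι j (φ m') (hφ m')) k * v k) := by
        intro m
        rw [step1 m]
        exact step2 m
      rw [Finset.sum_congr rfl fun m _ => stepA m, Finset.sum_comm]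
      rw [map_sum]
      refine Finset.sum_congr rfl fun m' _ => ?_
      rw [lact_tmul, Finset.sum_congr rfl fun m (_ : m ∈ Finset.univ) => rfl,
        tmul_sum_left ι j Finset.univ
          (fun m => xb m * ι (φ m (b * xb m')))
          (∑ k, i' (phiHat ι j (φ m') (hφ m')) k * v k),
        ← hdb (b * xb m')]
    · intro a v
      show (∑ m, tmul ι (j.comp ι) (xb m)
            (∑ k, i' (phiHat ι j (φ m) (hφ m)) k * (v k * a)))
          = ract ι (j.comp ι) a (∑ m, tmul ι (j.comp ι) (xb m)
            (∑ k, i' (phiHat ι j (φ m) (hφ m)) k * v k))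
      rw [map_sum]
      refine Finset.sum_congr rfl fun m _ => ?_
      rw [ract_tmul]
      congr 1
      rw [Finset.sum_mul]
      exact Finset.sum_congr rfl fun k _ => (mul_assoc _ _ _).symm
    · intro x
      show (∑ m, tmul ι (j.comp ι) (xb m)
            (∑ k, i' (phiHat ι j (φ m) (hφ m)) k * hEv ι j (p' (Pi.single k 1)) x))
          = x
      have key : ∀ m : Fin N,
          (∑ k, i' (phiHat ι j (φ m) (hφ m)) k * hEv ι j (p' (Pi.single k 1)) x)
            = hEv ι j (phiHat ι j (φ m) (hφ m)) x := by
        intro m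
        calc ∑ k, i' (phiHat ι j (φ m) (hφ m)) k * hEv ι j (p' (Pi.single k 1)) x
            = ∑ k, ((hEvF ι j x).comp p')
                (Pi.single k (i' (phiHat ι j (φ m) (hφ m)) k)) := by
              refine Finset.sum_congr rfl fun k _ => ?_
              rw [← hEv_asmul, ← h3, aux_mul_single]
              rfl
          _ = ((hEvF ι j x).comp p')
                (∑ k, Pi.single k (i' (phiHat ι j (φ m) (hφ m)) k)) :=
              (map_sum _ _ _).symm
          _ = hEv ι j (phiHat ι j (φ m) (hφ m)) x := by
              rw [Finset.univ_sum_single, AddMonoidHom.comp_apply, h5]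
              rfl
      rw [Finset.sum_congr rfl fun m _ => by rw [key m]]
      exact refl_db ι j xb φ hφ hdb x


end
end
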